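/- arXiv:2106.06495 — 7 statements merged into one kernel-verified Lean document; each statement's English description precedes it below -/
import Mathlib

section
/- Let α be a real number and define b_α(z) = ∫₀^z (1+t)^α dt on the unit disk. Then Re(1 + z b_α''(z)/b_α'(z)) = Re(1 + αz/(1+z)), and b_α satisfies Kaplan's close-to-convexity condition ∫_{θ₁}^{θ₂} Re(1 + z b_α''(z)/b_α'(z)) dθ > -π (for all 0 < r < 1 and θ₁ < θ₂, z = re^{iθ}) if and only if -3 ≤ α ≤ 1. -/
open Complex Metric Real


lemma re_pos_of_ball {z : ℂ} (hz : z ∈ ball (0:ℂ) 1) : 0 < ((1:ℂ) + z).re := by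
  simp only [mem_ball, dist_zero_right] at hz
  have h1 : -z.re ≤ ‖z‖ := by
    have := Complex.abs_re_le_norm z
    have := neg_abs_le z.re
    linarith
  simp only [Complex.add_re, Complex.one_re]
  have := hz
  linarith

lemma slit_of_ball {z : ℂ} (hz : z ∈ ball (0:ℂ) 1) : (1:ℂ) + z ∈ Complex.slitPlane :=
  Or.inl (re_pos_of_ball hz)

lemma ne_zero_of_ball {z : ℂ} (hz : z ∈ ball (0:ℂ) 1) : (1:ℂ) + z ≠ 0 :=
  Complex.slitPlane_ne_zero (slit_of_ball hz)

lemma slit_of_seg {z : ℂ} (hz : z ∈ ball (0:ℂ) 1) {t : ℝ} (ht : t ∈ Set.uIcc (0:ℝ) 1) :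
    (1:ℂ) + (t:ℂ) * z ∈ Complex.slitPlane := by
  apply slit_of_ball
  simp only [mem_ball, dist_zero_right] at hz ⊢
  rw [Set.uIcc_of_le zero_le_one] at ht
  calc ‖(t:ℂ) * z‖ = |t| * ‖z‖ := by simp [norm_mul]
    _ ≤ 1 * ‖z‖ := by
        apply mul_le_mul_of_nonneg_right _ (norm_nonneg z)
        rw [abs_le]; constructor <;> linarith [ht.1, ht.2]
    _ < 1 := by simpa using hz

lemma hasDerivAt_one_add_mul (z : ℂ) (t : ℝ) :
    HasDerivAt (fun s : ℝ => (1:ℂ) + (s:ℂ) * z) z t := by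
  have h : HasDerivAt (fun s : ℝ => (s:ℂ)) 1 t := by
    simpa using (hasDerivAt_id t).ofReal_comp
  simpa using (h.mul_const z).const_add 1

lemma integrable_aux {α : ℝ} {z : ℂ} (hz : z ∈ ball (0:ℂ) 1) :
    IntervalIntegrable (fun t : ℝ => ((1 + (t:ℂ) * z) ^ (α:ℂ)) * z)
      MeasureTheory.volume 0 1 := by
  apply ContinuousOn.intervalIntegrable
  intro t ht
  apply ContinuousWithinAt.mul _ continuousWithinAt_const
  apply ContinuousAt.continuousWithinAt
  have hc : ContinuousAt (fun s : ℝ => (1:ℂ) + (s:ℂ) * z) t :=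
    (continuous_const.add (continuous_ofReal.mul continuous_const)).continuousAt
  have hp : ContinuousAt (fun w : ℂ => w ^ (α:ℂ)) ((1:ℂ) + (t:ℂ)*z) :=
    continuousAt_cpow_const (slit_of_seg hz ht)
  exact ContinuousAt.comp (f := fun s : ℝ => (1:ℂ) + (s:ℂ)*z) hp hc

lemma bval_ne (α : ℝ) (hα : (α:ℂ) + 1 ≠ 0) {z : ℂ} (hz : z ∈ ball (0:ℂ) 1) :
    (∫ t in (0:ℝ)..1, ((1 + (t:ℂ) * z) ^ (α:ℂ)) * z)
      = ((1+z)^((α:ℂ)+1) - 1)/((α:ℂ)+1) := by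
  have key : ∀ t ∈ Set.uIcc (0:ℝ) 1,
      HasDerivAt (fun s : ℝ => (1 + (s:ℂ) * z) ^ ((α:ℂ)+1) / ((α:ℂ)+1))
        (((1 + (t:ℂ) * z) ^ (α:ℂ)) * z) t := by
    intro t ht
    have h1 := ((Complex.hasStrictDerivAt_cpow_const (c := (α:ℂ)+1)
      (slit_of_seg hz ht)).hasDerivAt.comp t (hasDerivAt_one_add_mul z t))
    have h2 := h1.div_const ((α:ℂ)+1)
    refine h2.congr_deriv ?_
    rw [add_sub_cancel_right]
    field_simp
  have := intervalIntegral.integral_eq_sub_of_hasDerivAt key (integrable_aux hz)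
  rw [this]
  simp [Complex.one_cpow]
  ring

lemma bval_neg_one {z : ℂ} (hz : z ∈ ball (0:ℂ) 1) :
    (∫ t in (0:ℝ)..1, ((1 + (t:ℂ) * z) ^ ((-1:ℝ):ℂ)) * z) = Complex.log (1+z) := by
  have key : ∀ t ∈ Set.uIcc (0:ℝ) 1,
      HasDerivAt (fun s : ℝ => Complex.log (1 + (s:ℂ) * z))
        (((1 + (t:ℂ) * z) ^ ((-1:ℝ):ℂ)) * z) t := by
    intro t ht
    have h1 := (hasDerivAt_one_add_mul z t).clog_real (slit_of_seg hz ht)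
    convert h1 using 1
    push_cast
    rw [Complex.cpow_neg_one]
    ring
  have := intervalIntegral.integral_eq_sub_of_hasDerivAt key (integrable_aux (α := -1) hz)
  rw [this]
  simp

lemma hasDerivAt_F_ne (α : ℝ) (hα : (α:ℂ) + 1 ≠ 0) {z : ℂ} (hz : z ∈ ball (0:ℂ) 1) :
    HasDerivAt (fun w : ℂ => ((1+w)^((α:ℂ)+1) - 1)/((α:ℂ)+1)) ((1+z)^(α:ℂ)) z := by
  have h0 : HasDerivAt (fun w : ℂ => (1:ℂ) + w) 1 z := by
    simpa using (hasDerivAt_id z).const_add (1:ℂ)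
  have h1 := (h0.cpow_const (c := (α:ℂ)+1) (slit_of_ball hz)).sub_const 1
  have h2 := h1.div_const ((α:ℂ)+1)
  refine h2.congr_deriv ?_
  rw [add_sub_cancel_right]
  field_simp

lemma hasDerivAt_F_neg_one {z : ℂ} (hz : z ∈ ball (0:ℂ) 1) :
    HasDerivAt (fun w : ℂ => Complex.log (1+w)) ((1+z)^((-1:ℝ):ℂ)) z := by
  have h0 : HasDerivAt (fun w : ℂ => (1:ℂ) + w) 1 z := by
    simpa using (hasDerivAt_id z).const_add (1:ℂ)
  have h1 := h0.clog (slit_of_ball hz)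
  convert h1 using 1
  push_cast
  rw [Complex.cpow_neg_one]
  ring

lemma deriv_b_eq (α : ℝ) (b : ℂ → ℂ)
    (hb : ∀ z ∈ ball (0:ℂ) 1,
      b z = ∫ t in (0:ℝ)..1, ((1 + (t : ℂ) * z) ^ (α : ℂ)) * z) :
    ∀ z ∈ ball (0:ℂ) 1, deriv b z = (1+z)^(α:ℂ) := by
  intro z hz
  by_cases hα : (α:ℂ) + 1 = 0
  · have hα' : α = -1 := by
      have : (α:ℂ) = -1 := by linear_combination hα
      exact_mod_cast this
    subst hα'
    have heq : b =ᶠ[nhds z] (fun w : ℂ => Complex.log (1+w)) := by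
      filter_upwards [isOpen_ball.mem_nhds hz] with w hw
      rw [hb w hw, bval_neg_one hw]
    rw [heq.deriv_eq, (hasDerivAt_F_neg_one hz).deriv]
  · have heq : b =ᶠ[nhds z] (fun w : ℂ => ((1+w)^((α:ℂ)+1) - 1)/((α:ℂ)+1)) := by
      filter_upwards [isOpen_ball.mem_nhds hz] with w hw
      rw [hb w hw, bval_ne α hα hw]
    rw [heq.deriv_eq, (hasDerivAt_F_ne α hα hz).deriv]

lemma deriv_deriv_b_eq (α : ℝ) (b : ℂ → ℂ)
    (hb : ∀ z ∈ ball (0:ℂ) 1,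
      b z = ∫ t in (0:ℝ)..1, ((1 + (t : ℂ) * z) ^ (α : ℂ)) * z) :
    ∀ z ∈ ball (0:ℂ) 1, deriv (deriv b) z = (α:ℂ) * (1+z)^((α:ℂ)-1) := by
  intro z hz
  have heq : deriv b =ᶠ[nhds z] (fun w : ℂ => (1+w)^(α:ℂ)) := by
    filter_upwards [isOpen_ball.mem_nhds hz] with w hw
    exact deriv_b_eq α b hb w hw
  rw [heq.deriv_eq]
  have h0 : HasDerivAt (fun w : ℂ => (1:ℂ) + w) 1 z := by
    simpa using (hasDerivAt_id z).const_add (1:ℂ)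
  have h1 := h0.cpow_const (c := (α:ℂ)) (slit_of_ball hz)
  rw [h1.deriv]
  ring

lemma expr_eq (α : ℝ) (b : ℂ → ℂ)
    (hb : ∀ z ∈ ball (0:ℂ) 1,
      b z = ∫ t in (0:ℝ)..1, ((1 + (t : ℂ) * z) ^ (α : ℂ)) * z) :
    ∀ z ∈ ball (0:ℂ) 1,
      1 + z * deriv (deriv b) z / deriv b z = 1 + (α:ℂ) * z / (1 + z) := by
  intro z hz
  rw [deriv_b_eq α b hb z hz, deriv_deriv_b_eq α b hb z hz]
  have hne : (1:ℂ) + z ≠ 0 := ne_zero_of_ball hz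
  have hpow : ((1:ℂ)+z)^(α:ℂ) ≠ 0 := by
    simp [Complex.cpow_eq_zero_iff, hne]
  have hsub : ((1:ℂ)+z)^((α:ℂ)-1) = ((1:ℂ)+z)^(α:ℂ) / (1+z) := by
    rw [Complex.cpow_sub _ _ hne, Complex.cpow_one]
  rw [hsub]
  field_simp

lemma mem_ball_circ {r : ℝ} (hr0 : 0 < r) (hr1 : r < 1) (θ : ℝ) :
    (r:ℂ) * Complex.exp ((θ:ℂ) * Complex.I) ∈ ball (0:ℂ) 1 := by
  simp only [mem_ball, dist_zero_right, norm_mul,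
    Complex.norm_exp_ofReal_mul_I, Complex.norm_real, Real.norm_eq_abs, mul_one]
  rwa [abs_of_pos hr0]

lemma hasDerivAt_phi {r : ℝ} (hr0 : 0 < r) (hr1 : r < 1) (θ : ℝ) :
    HasDerivAt (fun θ : ℝ => (Complex.log (1 + (r:ℂ) * Complex.exp ((θ:ℂ) * Complex.I))).im)
      ((((r:ℂ) * Complex.exp ((θ:ℂ) * Complex.I))
        / (1 + (r:ℂ) * Complex.exp ((θ:ℂ) * Complex.I))).re) θ := by
  set z := (r:ℂ) * Complex.exp ((θ:ℂ) * Complex.I) with hzdef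
  have hz : z ∈ ball (0:ℂ) 1 := mem_ball_circ hr0 hr1 θ
  have hsl := slit_of_ball hz
  have h1 : HasDerivAt (fun s : ℝ => (s:ℂ)) 1 θ := by
    simpa using (hasDerivAt_id θ).ofReal_comp
  have h2 := (h1.mul_const Complex.I).cexp
  have hc : HasDerivAt (fun s : ℝ => 1 + (r:ℂ) * Complex.exp ((s:ℂ) * Complex.I))
      ((r:ℂ) * (Complex.exp ((θ:ℂ) * Complex.I) * (1 * Complex.I))) θ :=
    (h2.const_mul ((r:ℂ))).const_add 1
  have hl := hc.clog_real hsl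
  have him := Complex.imCLM.hasFDerivAt.comp_hasDerivAt θ hl
  have : HasDerivAt (fun s : ℝ => (Complex.log (1 + (r:ℂ) * Complex.exp ((s:ℂ) * Complex.I))).im)
      ((((r:ℂ) * (Complex.exp ((θ:ℂ) * Complex.I) * (1 * Complex.I))) / (1 + z)).im) θ := him
  convert this using 1
  have hne : (1:ℂ) + z ≠ 0 := ne_zero_of_ball hz
  have : ((r:ℂ) * (Complex.exp ((θ:ℂ) * Complex.I) * (1 * Complex.I))) / (1 + z)
      = (z / (1 + z)) * Complex.I := by
    field_simp
    ring
  rw [this, Complex.mul_I_im]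

lemma cont_psi {r : ℝ} (hr0 : 0 < r) (hr1 : r < 1) :
    Continuous (fun θ : ℝ => (((r:ℂ) * Complex.exp ((θ:ℂ) * Complex.I))
        / (1 + (r:ℂ) * Complex.exp ((θ:ℂ) * Complex.I))).re) := by
  apply Complex.continuous_re.comp
  apply Continuous.div
  · exact continuous_const.mul ((Complex.continuous_ofReal.mul continuous_const).cexp)
  · exact continuous_const.add
      (continuous_const.mul ((Complex.continuous_ofReal.mul continuous_const).cexp))
  · intro θ
    exact ne_zero_of_ball (mem_ball_circ hr0 hr1 θ)

lemma psi_le {r : ℝ} (hr0 : 0 < r) (hr1 : r < 1) (θ : ℝ) :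
    (((r:ℂ) * Complex.exp ((θ:ℂ) * Complex.I))
        / (1 + (r:ℂ) * Complex.exp ((θ:ℂ) * Complex.I))).re ≤ r / (1 + r) := by
  set z := (r:ℂ) * Complex.exp ((θ:ℂ) * Complex.I) with hzdef
  have hzre : z.re = r * Real.cos θ := by
    rw [hzdef]
    simp [Complex.exp_ofReal_mul_I_re]
  have hzim : z.im = r * Real.sin θ := by
    rw [hzdef]
    simp [Complex.exp_ofReal_mul_I_im]
  have hne : (1:ℂ) + z ≠ 0 := ne_zero_of_ball (mem_ball_circ hr0 hr1 θ)
  have hpos : 0 < Complex.normSq (1 + z) := by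
    rwa [Complex.normSq_pos]
  rw [Complex.div_re]
  have h1re : (1 + z).re = 1 + r * Real.cos θ := by simp [hzre]
  have h1im : (1 + z).im = r * Real.sin θ := by simp [hzim]
  have hnsq : Complex.normSq (1 + z) = (1 + r * Real.cos θ)^2 + (r * Real.sin θ)^2 := by
    rw [Complex.normSq_apply, h1re, h1im]; ring
  rw [h1re, h1im, hzre, hzim, hnsq]
  rw [← add_div, div_le_div_iff₀ (by rw [← hnsq]; exact hpos) (by linarith)]
  have hsc : Real.sin θ ^ 2 + Real.cos θ ^ 2 = 1 := Real.sin_sq_add_cos_sq θ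
  have hc1 : Real.cos θ ≤ 1 := Real.cos_le_one θ
  nlinarith [sq_nonneg (Real.sin θ), sq_nonneg (1 - Real.cos θ), mul_pos hr0 (sub_pos.mpr hr1)]

lemma abs_phi_lt {r : ℝ} (hr0 : 0 < r) (hr1 : r < 1) (θ : ℝ) :
    |(Complex.log (1 + (r:ℂ) * Complex.exp ((θ:ℂ) * Complex.I))).im| < π / 2 := by
  rw [Complex.log_im]
  rw [Complex.abs_arg_lt_pi_div_two_iff]
  left
  exact re_pos_of_ball (mem_ball_circ hr0 hr1 θ)

lemma integral_formula (α : ℝ) {r : ℝ} (hr0 : 0 < r) (hr1 : r < 1) (θ₁ θ₂ : ℝ) :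
    (∫ θ in θ₁..θ₂, (1 + (α:ℂ) * ((r:ℂ) * Complex.exp ((θ:ℂ) * Complex.I))
        / (1 + (r:ℂ) * Complex.exp ((θ:ℂ) * Complex.I))).re)
      = (θ₂ - θ₁) + α * ((Complex.log (1 + (r:ℂ) * Complex.exp ((θ₂:ℂ) * Complex.I))).im
          - (Complex.log (1 + (r:ℂ) * Complex.exp ((θ₁:ℂ) * Complex.I))).im) := by
  have hpt : ∀ θ : ℝ, (1 + (α:ℂ) * ((r:ℂ) * Complex.exp ((θ:ℂ) * Complex.I))
        / (1 + (r:ℂ) * Complex.exp ((θ:ℂ) * Complex.I))).re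
      = 1 + α * (((r:ℂ) * Complex.exp ((θ:ℂ) * Complex.I))
        / (1 + (r:ℂ) * Complex.exp ((θ:ℂ) * Complex.I))).re := by
    intro θ
    rw [mul_div_assoc]
    simp [Complex.add_re, Complex.one_re, Complex.mul_re, Complex.ofReal_re, Complex.ofReal_im]
  simp_rw [hpt]
  have hderiv : ∀ θ ∈ Set.uIcc θ₁ θ₂,
      HasDerivAt (fun θ : ℝ => θ + α * (Complex.log (1 + (r:ℂ)
          * Complex.exp ((θ:ℂ) * Complex.I))).im)
        (1 + α * (((r:ℂ) * Complex.exp ((θ:ℂ) * Complex.I))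
          / (1 + (r:ℂ) * Complex.exp ((θ:ℂ) * Complex.I))).re) θ := by
    intro θ _
    exact (hasDerivAt_id θ).add ((hasDerivAt_phi hr0 hr1 θ).const_mul α)
  have hint : IntervalIntegrable (fun θ : ℝ => 1 + α * (((r:ℂ)
      * Complex.exp ((θ:ℂ) * Complex.I))
      / (1 + (r:ℂ) * Complex.exp ((θ:ℂ) * Complex.I))).re) MeasureTheory.volume θ₁ θ₂ :=
    (continuous_const.add (continuous_const.mul (cont_psi hr0 hr1))).intervalIntegrable _ _
  rw [intervalIntegral.integral_eq_sub_of_hasDerivAt hderiv hint]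
  ring

lemma phi_diff_le {r : ℝ} (hr0 : 0 < r) (hr1 : r < 1) {θ₁ θ₂ : ℝ} (h : θ₁ ≤ θ₂) :
    (Complex.log (1 + (r:ℂ) * Complex.exp ((θ₂:ℂ) * Complex.I))).im
      - (Complex.log (1 + (r:ℂ) * Complex.exp ((θ₁:ℂ) * Complex.I))).im
      ≤ (r / (1 + r)) * (θ₂ - θ₁) := by
  have hderiv : ∀ θ ∈ Set.uIcc θ₁ θ₂,
      HasDerivAt (fun θ : ℝ => (Complex.log (1 + (r:ℂ)
          * Complex.exp ((θ:ℂ) * Complex.I))).im)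
        ((((r:ℂ) * Complex.exp ((θ:ℂ) * Complex.I))
          / (1 + (r:ℂ) * Complex.exp ((θ:ℂ) * Complex.I))).re) θ :=
    fun θ _ => hasDerivAt_phi hr0 hr1 θ
  have hint : IntervalIntegrable (fun θ : ℝ => (((r:ℂ) * Complex.exp ((θ:ℂ) * Complex.I))
      / (1 + (r:ℂ) * Complex.exp ((θ:ℂ) * Complex.I))).re) MeasureTheory.volume θ₁ θ₂ :=
    (cont_psi hr0 hr1).intervalIntegrable θ₁ θ₂
  rw [← intervalIntegral.integral_eq_sub_of_hasDerivAt hderiv hint]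
  calc (∫ θ in θ₁..θ₂, (((r:ℂ) * Complex.exp ((θ:ℂ) * Complex.I))
          / (1 + (r:ℂ) * Complex.exp ((θ:ℂ) * Complex.I))).re)
      ≤ ∫ _ in θ₁..θ₂, r / (1 + r) ∂MeasureTheory.volume := by
        apply intervalIntegral.integral_mono_on h hint
          (intervalIntegrable_const (μ := MeasureTheory.volume))
        intro θ _
        exact psi_le hr0 hr1 θ
    _ = (r / (1 + r)) * (θ₂ - θ₁) := by
        rw [intervalIntegral.integral_const, smul_eq_mul]; ring

lemma phi_val {ε t θ : ℝ} (hs : 0 < Real.sin ε) (ht : t ∈ Set.Ioc (-π) π)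
    (hkey : (1:ℂ) + (Real.cos ε:ℂ) * Complex.exp ((θ:ℂ) * Complex.I)
      = (Real.sin ε:ℂ) * Complex.exp ((t:ℂ) * Complex.I)) :
    (Complex.log (1 + (Real.cos ε:ℂ) * Complex.exp ((θ:ℂ) * Complex.I))).im = t := by
  rw [hkey, Complex.log_im, Complex.exp_mul_I,
    Complex.arg_real_mul _ hs, Complex.arg_cos_add_sin_mul_I ht]

lemma sincos_c (ε : ℝ) : (Real.sin ε:ℂ)^2 + (Real.cos ε:ℂ)^2 = 1 := by
  exact_mod_cast Real.sin_sq_add_cos_sq ε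

lemma id1 (ε : ℝ) : (1:ℂ) + (Real.cos ε:ℂ) * Complex.exp (((π - ε : ℝ):ℂ) * Complex.I)
    = (Real.sin ε:ℂ) * Complex.exp (((π/2 - ε : ℝ):ℂ) * Complex.I) := by
  rw [Complex.exp_mul_I, Complex.exp_mul_I, ← Complex.ofReal_cos, ← Complex.ofReal_sin,
    ← Complex.ofReal_cos, ← Complex.ofReal_sin, Real.cos_pi_sub, Real.sin_pi_sub,
    Real.cos_pi_div_two_sub, Real.sin_pi_div_two_sub]
  push_cast
  linear_combination - Complex.sin_sq_add_cos_sq (ε:ℂ)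

lemma id2 (ε : ℝ) : (1:ℂ) + (Real.cos ε:ℂ) * Complex.exp (((π + ε : ℝ):ℂ) * Complex.I)
    = (Real.sin ε:ℂ) * Complex.exp (((ε - π/2 : ℝ):ℂ) * Complex.I) := by
  rw [Complex.exp_mul_I, Complex.exp_mul_I, ← Complex.ofReal_cos, ← Complex.ofReal_sin,
    ← Complex.ofReal_cos, ← Complex.ofReal_sin, Real.cos_add, Real.sin_add,
    Real.cos_sub, Real.sin_sub, Real.cos_pi, Real.sin_pi, Real.cos_pi_div_two,
    Real.sin_pi_div_two]
  push_cast
  linear_combination - Complex.sin_sq_add_cos_sq (ε:ℂ)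

lemma id3 (ε : ℝ) : (1:ℂ) + (Real.cos ε:ℂ) * Complex.exp (((ε - π : ℝ):ℂ) * Complex.I)
    = (Real.sin ε:ℂ) * Complex.exp (((ε - π/2 : ℝ):ℂ) * Complex.I) := by
  rw [Complex.exp_mul_I, Complex.exp_mul_I, ← Complex.ofReal_cos, ← Complex.ofReal_sin,
    ← Complex.ofReal_cos, ← Complex.ofReal_sin, Real.cos_sub, Real.sin_sub,
    Real.cos_sub, Real.sin_sub, Real.cos_pi, Real.sin_pi, Real.cos_pi_div_two,
    Real.sin_pi_div_two]
  push_cast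
  linear_combination - Complex.sin_sq_add_cos_sq (ε:ℂ)

/-- for `b_α(z) = ∫₀^z (1+t)^α dt` we have
`Re(1 + z b''/b') = Re(1 + αz/(1+z))`, and `b_α` satisfies Kaplan's condition
iff `-3 ≤ α ≤ 1`. -/
theorem stmt_1 (α : ℝ) (b : ℂ → ℂ)
    (hb : ∀ z ∈ ball (0:ℂ) 1,
      b z = ∫ t in (0:ℝ)..1, ((1 + (t : ℂ) * z) ^ (α : ℂ)) * z) :
    (∀ z ∈ ball (0:ℂ) 1,
        (1 + z * deriv (deriv b) z / deriv b z).re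
          = (1 + (α : ℂ) * z / (1 + z)).re)
    ∧
    ((∀ r : ℝ, 0 < r → r < 1 → ∀ θ₁ θ₂ : ℝ, θ₁ < θ₂ →
        -π < ∫ θ in θ₁..θ₂,
          (1 + ((r : ℂ) * Complex.exp (θ * Complex.I))
              * deriv (deriv b) ((r : ℂ) * Complex.exp (θ * Complex.I))
              / deriv b ((r : ℂ) * Complex.exp (θ * Complex.I))).re)
      ↔ (-3 ≤ α ∧ α ≤ 1)) := by
  have hexpr := expr_eq α b hb
  have hπ3 : 3 < π := Real.pi_gt_three
  refine ⟨fun z hz => by rw [hexpr z hz], ?_⟩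
  have hrw : ∀ r : ℝ, 0 < r → r < 1 → ∀ θ₁ θ₂ : ℝ,
      (∫ θ in θ₁..θ₂, (1 + ((r : ℂ) * Complex.exp (θ * Complex.I))
            * deriv (deriv b) ((r : ℂ) * Complex.exp (θ * Complex.I))
            / deriv b ((r : ℂ) * Complex.exp (θ * Complex.I))).re)
      = (θ₂ - θ₁) + α * ((Complex.log (1 + (r:ℂ) * Complex.exp ((θ₂:ℂ) * Complex.I))).im
          - (Complex.log (1 + (r:ℂ) * Complex.exp ((θ₁:ℂ) * Complex.I))).im) := by
    intro r hr0 hr1 θ₁ θ₂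
    rw [← integral_formula α hr0 hr1 θ₁ θ₂]
    congr 1
    funext θ
    rw [hexpr _ (mem_ball_circ hr0 hr1 θ)]
  constructor
  · intro H
    constructor
    · -- -3 ≤ α
      by_contra hcon
      push_neg at hcon
      set ε := min 1 ((3+α)*π/(2+2*α)) with hεdef
      have hq : 0 < (3+α)*π/(2+2*α) := by
        apply div_pos_of_neg_of_neg
        · nlinarith [Real.pi_pos]
        · linarith
      have hε0 : 0 < ε := lt_min one_pos hq
      have hε1 : ε ≤ 1 := min_le_left _ _
      have hεq : ε ≤ (3+α)*π/(2+2*α) := min_le_right _ _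
      have hr0 : 0 < Real.cos ε := Real.cos_pos_of_mem_Ioo ⟨by linarith, by linarith⟩
      have hr1 : Real.cos ε < 1 := by
        have h := Real.cos_lt_cos_of_nonneg_of_le_pi (le_refl 0) (by linarith) hε0
        rwa [Real.cos_zero] at h
      have hsin : 0 < Real.sin ε := Real.sin_pos_of_pos_of_lt_pi hε0 (by linarith)
      have hθ : ε - π < π - ε := by linarith
      have hval := H (Real.cos ε) hr0 hr1 (ε - π) (π - ε) hθ
      rw [hrw _ hr0 hr1 _ _] at hval
      rw [phi_val hsin ⟨by linarith, by linarith⟩ (id1 ε),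
        phi_val hsin ⟨by linarith, by linarith⟩ (id3 ε)] at hval
      rw [le_div_iff_of_neg (by linarith : 2+2*α < 0)] at hεq
      nlinarith
    · -- α ≤ 1
      by_contra hcon
      push_neg at hcon
      set ε := min 1 ((α-1)*π/(2*α+2)) with hεdef
      have hq : 0 < (α-1)*π/(2*α+2) := by
        apply div_pos
        · nlinarith [Real.pi_pos]
        · linarith
      have hε0 : 0 < ε := lt_min one_pos hq
      have hε1 : ε ≤ 1 := min_le_left _ _
      have hεq : ε ≤ (α-1)*π/(2*α+2) := min_le_right _ _
      have hr0 : 0 < Real.cos ε := Real.cos_pos_of_mem_Ioo ⟨by linarith, by linarith⟩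
      have hr1 : Real.cos ε < 1 := by
        have h := Real.cos_lt_cos_of_nonneg_of_le_pi (le_refl 0) (by linarith) hε0
        rwa [Real.cos_zero] at h
      have hsin : 0 < Real.sin ε := Real.sin_pos_of_pos_of_lt_pi hε0 (by linarith)
      have hθ : π - ε < π + ε := by linarith
      have hval := H (Real.cos ε) hr0 hr1 (π - ε) (π + ε) hθ
      rw [hrw _ hr0 hr1 _ _] at hval
      rw [phi_val hsin ⟨by linarith, by linarith⟩ (id2 ε),
        phi_val hsin ⟨by linarith, by linarith⟩ (id1 ε)] at hval
      rw [le_div_iff₀ (by linarith : (0:ℝ) < 2*α+2)] at hεq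
      nlinarith
  · rintro ⟨hα3, hα1⟩ r hr0 hr1 θ₁ θ₂ hθ
    rw [hrw r hr0 hr1 θ₁ θ₂]
    set φ₂ := (Complex.log (1 + (r:ℂ) * Complex.exp ((θ₂:ℂ) * Complex.I))).im with hφ2
    set φ₁ := (Complex.log (1 + (r:ℂ) * Complex.exp ((θ₁:ℂ) * Complex.I))).im with hφ1
    have h2a := abs_phi_lt hr0 hr1 θ₂
    have h1a := abs_phi_lt hr0 hr1 θ₁
    rw [abs_lt] at h2a h1a
    have hdp := phi_diff_le hr0 hr1 hθ.le
    have hhalf : r / (1+r) < 1/2 := by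
      rw [div_lt_iff₀ (by linarith)]
      linarith
    have h2p : 2 * (φ₂ - φ₁) < θ₂ - θ₁ := by
      have := mul_lt_mul_of_pos_right hhalf (by linarith : (0:ℝ) < θ₂ - θ₁)
      rw [← hφ2, ← hφ1] at hdp
      nlinarith
    rcases le_or_gt 0 (φ₂ - φ₁) with hp | hp
    · nlinarith [mul_nonneg (by linarith : (0:ℝ) ≤ α + 3) hp]
    · nlinarith [mul_nonpos_of_nonneg_of_nonpos (by linarith : (0:ℝ) ≤ 1 - α) hp.le]
end

section
/- If f is a convex function on the unit disk, then Re(z f'(z)/f(z)) > 1/2 for all z in the unit disk (interpreting the value at z=0 as 1). -/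
open Complex Metric

/-- The class 𝔉: analytic on the unit disk, `f 0 = 0`, `f' 0 = 1`, `f'` nonvanishing. -/
def Fclass (f : ℂ → ℂ) : Prop :=
  DifferentiableOn ℂ f (ball 0 1) ∧ f 0 = 0 ∧ deriv f 0 = 1 ∧
    ∀ z ∈ ball (0:ℂ) 1, deriv f z ≠ 0

/-- Normalized convex functions: `Re (1 + z f''/f') > 0` on the unit disk. -/
def Kclass (f : ℂ → ℂ) : Prop :=
  Fclass f ∧ ∀ z ∈ ball (0:ℂ) 1, 0 < (1 + z * deriv (deriv f) z / deriv f z).re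

section MarxStrohhacker
open Filter Set Topology


lemma ms_normSq_lt {a b : ℂ} : ‖a‖ < ‖b‖ ↔ normSq a < normSq b := by
  rw [← Complex.sq_norm, ← Complex.sq_norm]
  exact (pow_lt_pow_iff_left₀ (norm_nonneg _) (norm_nonneg _) two_ne_zero).symm

lemma ms_norm_lt_one_iff {P : ℂ} (hP : P ≠ 0) :
    ‖(1 - P) / P‖ < 1 ↔ 1 / 2 < P.re := by
  rw [norm_div, div_lt_one (norm_pos_iff.mpr hP), ms_normSq_lt]
  simp only [Complex.normSq_apply, Complex.sub_re, Complex.sub_im, Complex.one_re,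
    Complex.one_im]
  constructor <;> intro h <;> nlinarith

lemma ms_norm_eq_one {P : ℂ} (hP : P ≠ 0) (h : P.re = 1 / 2) :
    ‖(1 - P) / P‖ = 1 := by
  rw [norm_div, div_eq_one_iff_eq (norm_ne_zero_iff.mpr hP)]
  have : normSq (1 - P) = normSq P := by
    simp only [Complex.normSq_apply, Complex.sub_re, Complex.sub_im, Complex.one_re,
      Complex.one_im, h]
    ring
  have h2 := congrArg Real.sqrt this
  rwa [← Complex.norm_def, ← Complex.norm_def] at h2


lemma ms_hasDerivAt_normSq {W : ℝ → ℂ} {d : ℂ} {t : ℝ} (hW : HasDerivAt W d t) :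
    HasDerivAt (fun s => Complex.normSq (W s))
      (2 * ((starRingEnd ℂ) (W t) * d).re) t := by
  have hre : HasDerivAt (fun s => (W s).re) d.re t :=
    Complex.reCLM.hasFDerivAt.comp_hasDerivAt t hW
  have him : HasDerivAt (fun s => (W s).im) d.im t :=
    Complex.imCLM.hasFDerivAt.comp_hasDerivAt t hW
  have h := (hre.mul hre).add (him.mul him)
  have heq : (fun s => Complex.normSq (W s))
      = fun s => (W s).re * (W s).re + (W s).im * (W s).im := by
    funext s; simp [Complex.normSq_apply]
  have h2 : (2 * ((starRingEnd ℂ) (W t) * d).re)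
      = d.re * (W t).re + (W t).re * d.re + (d.im * (W t).im + (W t).im * d.im) := by
    simp only [Complex.mul_re, Complex.conj_re, Complex.conj_im]
    ring
  rw [heq, h2]; exact h

lemma ms_hasDerivAt_line {w : ℂ → ℂ} {ζ : ℂ} {t : ℝ}
    (hw : DifferentiableAt ℂ w ((t : ℂ) * ζ)) :
    HasDerivAt (fun s : ℝ => w ((s : ℂ) * ζ)) (deriv w ((t : ℂ) * ζ) * ζ) t := by
  have h1 : HasDerivAt (fun s : ℝ => (s : ℂ) * ζ) ζ t := by
    simpa using (Complex.ofRealCLM.hasDerivAt (x := t)).mul_const ζ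
  exact (hw.hasDerivAt.comp t h1)

lemma ms_jack {w : ℂ → ℂ} {ρ ρ' : ℝ} (hρ0 : 0 < ρ) (hρρ' : ρ < ρ')
    (hw : DifferentiableOn ℂ w (ball 0 ρ'))
    (hbound : ∀ z : ℂ, ‖z‖ < ρ → ‖w z‖ < 1) (h0 : w 0 = 0)
    {z₀ : ℂ} (hz₀ : ‖z₀‖ = ρ) (hw₀ : ‖w z₀‖ = 1) :
    ∃ k : ℝ, 1 ≤ k ∧ z₀ * deriv w z₀ = (k : ℂ) * w z₀ := by
  have hdiffat : ∀ ζ : ℂ, ‖ζ‖ ≤ ρ → DifferentiableAt ℂ w ζ := fun ζ h =>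
    hw.differentiableAt (isOpen_ball.mem_nhds (by
      rw [mem_ball_zero_iff]; exact lt_of_le_of_lt h hρρ'))
  have hwball : DifferentiableOn ℂ w (ball 0 ρ) :=
    hw.mono (ball_subset_ball hρρ'.le)
  have maps : MapsTo w (ball 0 ρ) (ball (w 0) 1) := fun z hz => by
    rw [h0, mem_ball_zero_iff]; exact hbound z (mem_ball_zero_iff.mp hz)
  have schwarz : ∀ z : ℂ, ‖z‖ < ρ → ‖w z‖ ≤ ‖z‖ / ρ := by
    intro z hz
    have := Complex.dist_le_div_mul_dist_of_mapsTo_ball hwball (maps.mono_right ball_subset_closedBall)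
      (mem_ball_zero_iff.mpr hz)
    rw [h0, dist_zero_right, dist_zero_right] at this
    calc ‖w z‖ ≤ 1 / ρ * ‖z‖ := this
    _ = ‖z‖ / ρ := by ring
  -- boundary bound on the circle of radius ρ
  have hcb : ∀ ζ : ℂ, ‖ζ‖ = ρ → ‖w ζ‖ ≤ 1 := by
    intro ζ h
    have hζcont : ContinuousAt w ζ := (hdiffat ζ h.le).continuousAt
    have base : Tendsto (fun t : ℝ => (t:ℂ) * ζ) (𝓝[<] 1) (𝓝 ζ) := by
      have hcont : Continuous fun t : ℝ => (t:ℂ) * ζ := by continuity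
      have := hcont.tendsto 1
      simp only [Complex.ofReal_one, one_mul] at this
      exact this.mono_left nhdsWithin_le_nhds
    have hT : Tendsto (fun t : ℝ => ‖w ((t:ℂ) * ζ)‖) (𝓝[<] 1) (𝓝 ‖w ζ‖) :=
      (continuous_norm.tendsto _).comp (hζcont.tendsto.comp base)
    refine le_of_tendsto hT ?_
    filter_upwards [Ioo_mem_nhdsLT_of_mem (by norm_num : (1:ℝ) ∈ Ioc (0:ℝ) 1)]
      with t ht
    have h1 : ‖(t:ℂ) * ζ‖ = t * ρ := by
      rw [norm_mul, Complex.norm_real, Real.norm_eq_abs, abs_of_pos ht.1, h]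
    have h2 : ‖(t:ℂ) * ζ‖ < ρ := by rw [h1]; nlinarith [ht.2, hρ0]
    calc ‖w ((t:ℂ)*ζ)‖ ≤ ‖(t:ℂ)*ζ‖ / ρ := schwarz _ h2
    _ = t := by rw [h1]; field_simp
    _ ≤ 1 := ht.2.le
  -- radial derivative inequality
  have hdz₀ : DifferentiableAt ℂ w z₀ := hdiffat z₀ hz₀.le
  have hW : HasDerivAt (fun t : ℝ => w ((t:ℂ) * z₀)) (deriv w z₀ * z₀) 1 := by
    have := ms_hasDerivAt_line (w := w) (ζ := z₀) (t := 1) (by simpa using hdz₀)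
    simpa using this
  set u : ℂ := (starRingEnd ℂ) (w z₀) * (deriv w z₀ * z₀) with hu
  have hφ : HasDerivAt (fun t : ℝ => Complex.normSq (w ((t:ℂ) * z₀))) (2 * u.re) 1 := by
    have h := ms_hasDerivAt_normSq hW
    simpa only [Complex.ofReal_one, one_mul] using h
  have hnsq : Complex.normSq (w z₀) = 1 := by
    have : ‖w z₀‖ ^ 2 = Complex.normSq (w z₀) := Complex.sq_norm _
    rw [hw₀] at this; linarith [this.symm]
  have hure : 1 ≤ u.re := by
    have hslope : Tendsto (slope (fun t : ℝ => Complex.normSq (w ((t:ℂ) * z₀))) 1)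
        (𝓝[<] 1) (𝓝 (2 * u.re)) :=
      (hasDerivAt_iff_tendsto_slope.mp hφ).mono_left
        (nhdsWithin_mono _ fun x hx => ne_of_lt hx)
    have hlin : Tendsto (fun t : ℝ => t + 1) (𝓝[<] (1:ℝ)) (𝓝 2) := by
      have hcont : Continuous (fun t : ℝ => t + 1) := by continuity
      have := hcont.tendsto (1:ℝ)
      norm_num at this
      exact this.mono_left nhdsWithin_le_nhds
    have hle : 2 ≤ 2 * u.re := by
      refine le_of_tendsto_of_tendsto hlin hslope ?_
      filter_upwards [Ioo_mem_nhdsLT_of_mem (by norm_num : (1:ℝ) ∈ Ioc (0:ℝ) 1)]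
        with t ht
      have h1 : ‖(t:ℂ) * z₀‖ = t * ρ := by
        rw [norm_mul, Complex.norm_real, Real.norm_eq_abs, abs_of_pos ht.1, hz₀]
      have h2 : ‖(t:ℂ) * z₀‖ < ρ := by rw [h1]; nlinarith [ht.2, hρ0]
      have h3 : ‖w ((t:ℂ) * z₀)‖ ≤ t := by
        calc ‖w ((t:ℂ)*z₀)‖ ≤ ‖(t:ℂ)*z₀‖ / ρ := schwarz _ h2
        _ = t := by rw [h1]; field_simp
      have h4 : Complex.normSq (w ((t:ℂ) * z₀)) ≤ t ^ 2 := by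
        rw [← Complex.sq_norm]
        have h3' : ‖w ((t:ℂ)*z₀)‖ ≤ t := h3
        have h5 : (0:ℝ) ≤ ‖w ((t:ℂ)*z₀)‖ := norm_nonneg _
        nlinarith
      have hone : ((1:ℝ):ℂ) * z₀ = z₀ := by simp
      rw [slope_def_field]
      rw [hone, hnsq]
      rw [le_div_iff_of_neg (by linarith [ht.2] : t - 1 < 0)]
      nlinarith [ht.2]
    linarith
  -- angular derivative vanishes
  have hZ : HasDerivAt (fun θ : ℝ => z₀ * Complex.exp ((θ:ℂ) * Complex.I))
      (z₀ * Complex.I) 0 := by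
    have inner : HasDerivAt (fun θ : ℝ => (θ:ℂ) * Complex.I) Complex.I 0 := by
      simpa using (Complex.ofRealCLM.hasDerivAt (x := (0:ℝ))).mul_const Complex.I
    have hexp := inner.cexp
    have := hexp.const_mul z₀
    simpa using this
  have hw' : HasDerivAt w (deriv w z₀)
      ((fun θ : ℝ => z₀ * Complex.exp ((θ:ℂ) * Complex.I)) 0) := by
    simpa using hdz₀.hasDerivAt
  have hWZ : HasDerivAt (fun θ : ℝ => w (z₀ * Complex.exp ((θ:ℂ) * Complex.I)))
      (deriv w z₀ * (z₀ * Complex.I)) 0 := hw'.comp (0:ℝ) hZ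
  have hψ : HasDerivAt (fun θ : ℝ => Complex.normSq (w (z₀ * Complex.exp ((θ:ℂ) * Complex.I))))
      (2 * (u * Complex.I).re) 0 := by
    have h := ms_hasDerivAt_normSq hWZ
    have harg : (starRingEnd ℂ) (w (z₀ * Complex.exp (((0:ℝ):ℂ) * Complex.I)))
        * (deriv w z₀ * (z₀ * Complex.I)) = u * Complex.I := by
      rw [hu]
      simp only [Complex.ofReal_zero, zero_mul, Complex.exp_zero, mul_one]
      ring
    rw [harg] at h
    exact h
  have hψmax : IsLocalMax
      (fun θ : ℝ => Complex.normSq (w (z₀ * Complex.exp ((θ:ℂ) * Complex.I)))) 0 := by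
    apply Filter.Eventually.of_forall
    intro θ
    have hcirc : ‖z₀ * Complex.exp ((θ:ℂ) * Complex.I)‖ = ρ := by
      rw [norm_mul,
        Complex.norm_exp_ofReal_mul_I, mul_one]
      exact hz₀
    have hbd := hcb _ hcirc
    have : Complex.normSq (w (z₀ * Complex.exp ((θ:ℂ) * Complex.I))) ≤ 1 := by
      rw [← Complex.sq_norm]
      have h5 : (0:ℝ) ≤ ‖w (z₀ * Complex.exp ((θ:ℂ) * Complex.I))‖ :=
        norm_nonneg _
      have hbd' : ‖w (z₀ * Complex.exp ((θ:ℂ) * Complex.I))‖ ≤ 1 := hbd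
      nlinarith
    calc Complex.normSq (w (z₀ * Complex.exp ((θ:ℂ) * Complex.I))) ≤ 1 := this
    _ = Complex.normSq (w (z₀ * Complex.exp (((0:ℝ):ℂ) * Complex.I))) := by
        simp only [Complex.ofReal_zero, zero_mul, Complex.exp_zero, mul_one]
        exact hnsq.symm
  have huim : (u * Complex.I).re = 0 := by
    have := hψmax.hasDerivAt_eq_zero hψ
    linarith
  have huim' : u.im = 0 := by
    have : (u * Complex.I).re = -u.im := by simp [Complex.mul_re]
    rw [this] at huim; linarith
  refine ⟨u.re, hure, ?_⟩
  have hueq : u = (u.re : ℂ) := by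
    apply Complex.ext <;> simp [huim']
  have hmc : w z₀ * u = deriv w z₀ * z₀ := by
    rw [hu, ← mul_assoc, Complex.mul_conj, hnsq]
    simp
  calc z₀ * deriv w z₀ = w z₀ * u := by rw [hmc]; ring
  _ = (u.re : ℂ) * w z₀ := by rw [← hueq]; ring

lemma ms_pole {f : ℂ → ℂ} (hd : DifferentiableOn ℂ f (ball 0 1)) (hf0 : f 0 = 0)
    {ρ : ℝ} (hρ0 : 0 < ρ) (hρ1 : ρ < 1) {ζ : ℂ} (hζ : ‖ζ‖ = ρ)
    (hgood : ∀ z : ℂ, ‖z‖ < ρ →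
      dslope f 0 z ≠ 0 ∧ 1 / 2 < (deriv f z / dslope f 0 z).re)
    (hfζ : f ζ = 0) (hf'ζ : deriv f ζ ≠ 0) : False := by
  have hζ1 : ζ ∈ ball (0:ℂ) 1 := by rw [mem_ball_zero_iff, hζ]; exact hρ1
  have hζ0 : ζ ≠ 0 := by
    intro h; rw [h, norm_zero] at hζ; exact absurd hζ.symm (ne_of_gt hρ0)
  have hfd : DifferentiableAt ℂ f ζ := hd.differentiableAt (isOpen_ball.mem_nhds hζ1)
  set F : ℝ → ℂ := fun t => f ((t:ℂ) * ζ) with hF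
  have hFd : HasDerivAt F (deriv f ζ * ζ) 1 := by
    have := ms_hasDerivAt_line (w := f) (ζ := ζ) (t := 1) (by simpa using hfd)
    simpa using this
  have hslope : Tendsto (slope F 1) (𝓝[<] 1) (𝓝 (deriv f ζ * ζ)) :=
    (hasDerivAt_iff_tendsto_slope.mp hFd).mono_left
      (nhdsWithin_mono _ fun x hx => ne_of_lt hx)
  have hdc : ContinuousAt (deriv f) ζ :=
    (((hd.analyticOnNhd isOpen_ball).deriv) ζ hζ1).continuousAt
  have base : Tendsto (fun t : ℝ => (t:ℂ) * ζ) (𝓝 1) (𝓝 ζ) := by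
    have : Continuous fun t : ℝ => (t:ℂ) * ζ := by continuity
    simpa using this.tendsto 1
  have hNc : Tendsto (fun t : ℝ => (t:ℂ) * ζ * deriv f ((t:ℂ) * ζ)) (𝓝[<] 1)
      (𝓝 (ζ * deriv f ζ)) :=
    (base.mul (hdc.tendsto.comp base)).mono_left nhdsWithin_le_nhds
  have hne : deriv f ζ * ζ ≠ 0 := mul_ne_zero hf'ζ hζ0
  have hc : Tendsto (fun t : ℝ => ((t:ℂ) * ζ * deriv f ((t:ℂ) * ζ)) / slope F 1 t)
      (𝓝[<] 1) (𝓝 1) := by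
    have := hNc.div hslope hne
    rwa [show ζ * deriv f ζ / (deriv f ζ * ζ) = 1 by
      rw [mul_comm, div_self hne]] at this
  have hre : Tendsto (fun t : ℝ => (((t:ℂ) * ζ * deriv f ((t:ℂ) * ζ)) / slope F 1 t).re)
      (𝓝[<] 1) (𝓝 1) := by
    have := (Complex.continuous_re.tendsto 1).comp hc
    exact this
  have ev1 : ∀ᶠ t : ℝ in 𝓝[<] 1,
      1 / 2 < (((t:ℂ) * ζ * deriv f ((t:ℂ) * ζ)) / slope F 1 t).re :=
    hre.eventually (eventually_gt_nhds (by norm_num))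
  have ev2 : ∀ᶠ t : ℝ in 𝓝[<] 1, t ∈ Ioo (0:ℝ) 1 :=
    Ioo_mem_nhdsLT_of_mem (by norm_num : (1:ℝ) ∈ Ioc (0:ℝ) 1)
  obtain ⟨t, ht1, ht2⟩ := (ev1.and ev2).exists
  obtain ⟨ht0, htlt⟩ := ht2
  set ξ : ℂ := (t:ℂ) * ζ with hξdef
  have hξ0 : ξ ≠ 0 := mul_ne_zero (by exact_mod_cast ht0.ne') hζ0
  have hξρ : ‖ξ‖ < ρ := by
    rw [hξdef, norm_mul, Complex.norm_real, Real.norm_eq_abs, abs_of_pos ht0, hζ]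
    nlinarith
  obtain ⟨hgξ, hpξ⟩ := hgood ξ hξρ
  have hfξ : f ξ = ξ * dslope f 0 ξ := by
    have := sub_smul_dslope f 0 ξ
    rw [hf0, sub_zero, sub_zero, smul_eq_mul] at this
    exact this.symm
  have hfξ0 : f ξ ≠ 0 := by rw [hfξ]; exact mul_ne_zero hξ0 hgξ
  have hdsl : dslope f 0 ξ = f ξ / ξ := by
    field_simp [hfξ]
    rw [hfξ]; ring
  have hslval : slope F 1 t = (((t:ℝ) - 1 : ℝ) : ℂ)⁻¹ * f ξ := by
    rw [slope_def_module]
    have : F 1 = 0 := by simp [hF, hf0, hfζ]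
    rw [this, sub_zero, Complex.real_smul, Complex.ofReal_inv]
  have hkey : (((t:ℂ) * ζ * deriv f ((t:ℂ) * ζ)) / slope F 1 t)
      = (((t - 1 : ℝ)) : ℂ) * (deriv f ξ / dslope f 0 ξ) := by
    rw [hslval, hdsl]
    have htne : (((t - 1 : ℝ)) : ℂ) ≠ 0 := by
      simp only [ne_eq, Complex.ofReal_eq_zero]
      linarith
    field_simp
    ring
  rw [hkey] at ht1
  have hrecalc : ((((t - 1 : ℝ)) : ℂ) * (deriv f ξ / dslope f 0 ξ)).re
      = (t - 1) * (deriv f ξ / dslope f 0 ξ).re := by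
    rw [Complex.re_ofReal_mul]
  rw [hrecalc] at ht1
  nlinarith

section Main
variable {f : ℂ → ℂ}

lemma ms_main (hd : DifferentiableOn ℂ f (ball 0 1)) (hf0 : f 0 = 0) (hd0 : deriv f 0 = 1)
    (hdne : ∀ z ∈ ball (0:ℂ) 1, deriv f z ≠ 0)
    (hconv : ∀ z ∈ ball (0:ℂ) 1, 0 < (1 + z * deriv (deriv f) z / deriv f z).re)
    {z : ℂ} (hz1 : ‖z‖ < 1) (hz0 : z ≠ 0)
    (hcon : (z * deriv f z / f z).re ≤ 1 / 2) : False := by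
  have han : AnalyticOnNhd ℂ f (ball 0 1) := hd.analyticOnNhd isOpen_ball
  have hd' : DifferentiableOn ℂ (deriv f) (ball 0 1) := han.deriv.differentiableOn
  have h0mem : (0:ℂ) ∈ ball (0:ℂ) 1 := mem_ball_self one_pos
  obtain ⟨g, hgdef⟩ : ∃ g : ℂ → ℂ, g = dslope f 0 := ⟨_, rfl⟩
  obtain ⟨p, hpdef⟩ : ∃ p : ℂ → ℂ, p = fun ζ => deriv f ζ / g ζ := ⟨_, rfl⟩
  have hgd : DifferentiableOn ℂ g (ball 0 1) := by
    rw [hgdef]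
    exact (differentiableOn_dslope (isOpen_ball.mem_nhds h0mem)).mpr hd
  have hg0 : g 0 = 1 := by rw [hgdef, dslope_same]; exact hd0
  have hfzg : ∀ ζ : ℂ, f ζ = ζ * g ζ := by
    intro ζ
    have h := sub_smul_dslope f 0 ζ
    rw [hf0, sub_zero, sub_zero, smul_eq_mul, ← hgdef] at h
    exact h.symm
  have hdiffg : ∀ ζ : ℂ, ‖ζ‖ < 1 → DifferentiableAt ℂ g ζ := fun ζ h =>
    hgd.differentiableAt (isOpen_ball.mem_nhds (mem_ball_zero_iff.mpr h))
  have hdifff' : ∀ ζ : ℂ, ‖ζ‖ < 1 → DifferentiableAt ℂ (deriv f) ζ := fun ζ h =>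
    hd'.differentiableAt (isOpen_ball.mem_nhds (mem_ball_zero_iff.mpr h))
  have hdiffp : ∀ ζ : ℂ, ‖ζ‖ < 1 → g ζ ≠ 0 → DifferentiableAt ℂ p ζ := by
    intro ζ h hgζ
    rw [hpdef]
    exact (hdifff' ζ h).div (hdiffg ζ h) hgζ
  have hpval : ∀ ζ : ℂ, p ζ = deriv f ζ / g ζ := fun ζ => by rw [hpdef]
  set U : Set ℂ := {ζ | ‖ζ‖ < 1 ∧ g ζ ≠ 0 ∧ 1/2 < (p ζ).re} with hUdef
  have hUopen : IsOpen U := by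
    rw [isOpen_iff_mem_nhds]
    rintro ζ ⟨h1, h2, h3⟩
    have e1 : ∀ᶠ x in 𝓝 ζ, ‖x‖ < 1 :=
      (continuous_norm.tendsto ζ).eventually (eventually_lt_nhds h1)
    have e2 : ∀ᶠ x in 𝓝 ζ, g x ≠ 0 := (hdiffg ζ h1).continuousAt.eventually_ne h2
    have e3 : ∀ᶠ x in 𝓝 ζ, 1/2 < (p x).re := by
      have hc : ContinuousAt (fun x => (p x).re) ζ :=
        Complex.continuous_re.continuousAt.comp (hdiffp ζ h1 h2).continuousAt
      exact hc.eventually (eventually_gt_nhds h3)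
    filter_upwards [e1, e2, e3] with x hx1 hx2 hx3
    exact ⟨hx1, hx2, hx3⟩
  have hzbad : z ∉ U := by
    rintro ⟨-, hgz, hpz⟩
    have hfz : f z ≠ 0 := by rw [hfzg z]; exact mul_ne_zero hz0 hgz
    have hpzval : p z = z * deriv f z / f z := by
      rw [hpval z, hfzg z]
      field_simp
    rw [hpzval] at hpz
    exact absurd hpz (not_lt.mpr hcon)
  set r₁ : ℝ := (‖z‖ + 1) / 2 with hr₁def
  have hzr₁ : ‖z‖ ≤ r₁ := by rw [hr₁def]; linarith
  have hr₁1 : r₁ < 1 := by rw [hr₁def]; linarith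
  set K : Set ℂ := closedBall 0 r₁ \ U with hKdef
  have hKcomp : IsCompact K := (isCompact_closedBall _ _).diff hUopen
  have hzK : z ∈ K := ⟨mem_closedBall_zero_iff.mpr hzr₁, hzbad⟩
  obtain ⟨z₀, hz₀K, hz₀min⟩ :=
    hKcomp.exists_isMinOn ⟨z, hzK⟩ continuous_norm.continuousOn
  set ρ : ℝ := ‖z₀‖ with hρdef
  have hρr₁ : ρ ≤ r₁ := mem_closedBall_zero_iff.mp hz₀K.1
  have hρ1 : ρ < 1 := lt_of_le_of_lt hρr₁ hr₁1
  have hgood : ∀ ζ : ℂ, ‖ζ‖ < ρ → g ζ ≠ 0 ∧ 1/2 < (p ζ).re := by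
    intro ζ hζ
    have hζ1 : ‖ζ‖ < 1 := hζ.trans hρ1
    by_contra hcc
    have hζU : ζ ∉ U := by rintro ⟨-, h2, h3⟩; exact hcc ⟨h2, h3⟩
    have hζK : ζ ∈ K := ⟨mem_closedBall_zero_iff.mpr (hζ.le.trans hρr₁), hζU⟩
    have hmin := isMinOn_iff.mp hz₀min ζ hζK
    exact absurd (lt_of_lt_of_le hζ hmin) (lt_irrefl _)
  have hz₀bad : g z₀ = 0 ∨ (p z₀).re ≤ 1/2 := by
    by_contra hcc
    push_neg at hcc
    exact hz₀K.2 ⟨hρ1, hcc.1, hcc.2⟩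
  have hz₀ne : z₀ ≠ 0 := by
    intro h
    rw [h] at hz₀bad
    rcases hz₀bad with h1 | h2
    · rw [hg0] at h1; exact one_ne_zero h1
    · rw [hpval 0] at h2
      simp only [hg0, hd0, div_one, Complex.one_re] at h2
      norm_num at h2
  have hρ0 : 0 < ρ := norm_pos_iff.mpr hz₀ne
  have hcirc : ∀ ζ : ℂ, ‖ζ‖ = ρ → g ζ ≠ 0 := by
    intro ζ hζ hgζ
    have hgood' : ∀ x : ℂ, ‖x‖ < ρ →
        dslope f 0 x ≠ 0 ∧ 1/2 < (deriv f x / dslope f 0 x).re := by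
      intro x hx
      have h := hgood x hx
      rw [hpval x] at h
      rw [← hgdef]
      exact h
    exact ms_pole hd hf0 hρ0 hρ1 hζ hgood'
      (by rw [hfzg ζ, hgζ, mul_zero]) (hdne ζ (mem_ball_zero_iff.mpr (hζ ▸ hρ1)))
  have hgz₀ : g z₀ ≠ 0 := hcirc z₀ rfl
  have hre₀le : (p z₀).re ≤ 1/2 := hz₀bad.resolve_left (fun h => hgz₀ h)
  have hre₀ge : 1/2 ≤ (p z₀).re := by
    have hpc : ContinuousAt p z₀ := (hdiffp z₀ hρ1 hgz₀).continuousAt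
    have base : Tendsto (fun t : ℝ => (t:ℂ) * z₀) (𝓝[<] 1) (𝓝 z₀) := by
      have hcont : Continuous fun t : ℝ => (t:ℂ) * z₀ := by continuity
      have h := hcont.tendsto 1
      simp only [Complex.ofReal_one, one_mul] at h
      exact h.mono_left nhdsWithin_le_nhds
    have hT : Tendsto (fun t : ℝ => (p ((t:ℂ) * z₀)).re) (𝓝[<] 1) (𝓝 (p z₀).re) :=
      (Complex.continuous_re.tendsto _).comp (hpc.tendsto.comp base)
    refine ge_of_tendsto hT ?_
    filter_upwards [Ioo_mem_nhdsLT_of_mem (by norm_num : (1:ℝ) ∈ Ioc (0:ℝ) 1)]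
      with t ht
    have h1 : ‖(t:ℂ) * z₀‖ < ρ := by
      rw [norm_mul, Complex.norm_real, Real.norm_eq_abs, abs_of_pos ht.1]
      nlinarith [ht.2, hρ0]
    exact (hgood _ h1).2.le
  have hre : (p z₀).re = 1/2 := le_antisymm hre₀le hre₀ge
  -- enlarge the region where `g ≠ 0`
  set V : Set ℂ := {ζ | ‖ζ‖ < 1 ∧ g ζ ≠ 0} with hVdef
  have hVopen : IsOpen V := by
    rw [isOpen_iff_mem_nhds]
    rintro ζ ⟨h1, h2⟩
    have e1 : ∀ᶠ x in 𝓝 ζ, ‖x‖ < 1 :=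
      (continuous_norm.tendsto ζ).eventually (eventually_lt_nhds h1)
    have e2 : ∀ᶠ x in 𝓝 ζ, g x ≠ 0 := (hdiffg ζ h1).continuousAt.eventually_ne h2
    filter_upwards [e1, e2] with x hx1 hx2
    exact ⟨hx1, hx2⟩
  have hsub : closedBall (0:ℂ) ρ ⊆ V := by
    intro ζ hζ
    rw [mem_closedBall_zero_iff] at hζ
    rcases lt_or_eq_of_le hζ with h | h
    · exact ⟨h.trans hρ1, (hgood ζ h).1⟩
    · exact ⟨h ▸ hρ1, hcirc ζ h⟩
  obtain ⟨ε, hε0, hεsub⟩ :=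
    (isCompact_closedBall (0:ℂ) ρ).exists_cthickening_subset_open hVopen hsub
  set ρ' : ℝ := ε + ρ with hρ'def
  have hρρ' : ρ < ρ' := by rw [hρ'def]; linarith
  have hεsub' : closedBall (0:ℂ) ρ' ⊆ V := by
    rw [hρ'def, ← cthickening_closedBall hε0.le hρ0.le]
    exact hεsub
  have hVball : ∀ ζ : ℂ, ‖ζ‖ < ρ' → ‖ζ‖ < 1 ∧ g ζ ≠ 0 := fun ζ h =>
    hεsub' (mem_closedBall_zero_iff.mpr h.le)
  -- the function w
  obtain ⟨w, hwdef⟩ : ∃ w : ℂ → ℂ, w = fun ζ => (1 - p ζ) / p ζ := ⟨_, rfl⟩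
  have hwval : ∀ ζ : ℂ, w ζ = (1 - p ζ) / p ζ := fun ζ => by rw [hwdef]
  have hpne : ∀ ζ : ℂ, ‖ζ‖ < ρ' → p ζ ≠ 0 := by
    intro ζ h
    rw [hpval ζ]
    exact div_ne_zero (hdne ζ (mem_ball_zero_iff.mpr (hVball ζ h).1)) (hVball ζ h).2
  have hwdiff : DifferentiableOn ℂ w (ball 0 ρ') := by
    rw [hwdef]
    intro ζ hζ
    have h := mem_ball_zero_iff.mp hζ
    have hpd : DifferentiableAt ℂ p ζ := hdiffp ζ (hVball ζ h).1 (hVball ζ h).2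
    exact (((differentiableAt_const (1:ℂ)).sub hpd).div hpd
      (hpne ζ h)).differentiableWithinAt
  have hp0 : p 0 = 1 := by rw [hpval 0, hg0, hd0, div_one]
  have hw0 : w 0 = 0 := by rw [hwval 0, hp0]; simp
  have hbound : ∀ ζ : ℂ, ‖ζ‖ < ρ → ‖w ζ‖ < 1 := by
    intro ζ h
    rw [hwval ζ]
    exact (ms_norm_lt_one_iff (hpne ζ (h.trans hρρ'))).mpr (hgood ζ h).2
  have hw₀1 : ‖w z₀‖ = 1 := by
    rw [hwval z₀]
    exact ms_norm_eq_one (hpne z₀ hρρ') hre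
  obtain ⟨k, hk1, hkeq⟩ := ms_jack hρ0 hρρ' hwdiff hbound hw0 rfl hw₀1
  -- derivative algebra at z₀
  have hpz₀d : DifferentiableAt ℂ p z₀ := hdiffp z₀ hρ1 hgz₀
  have hPne : p z₀ ≠ 0 := hpne z₀ hρρ'
  have hc1 : HasDerivAt (fun ζ => 1 - p ζ) (0 - deriv p z₀) z₀ :=
    (hasDerivAt_const z₀ (1:ℂ)).sub hpz₀d.hasDerivAt
  have hdivfull : HasDerivAt (fun ζ => (1 - p ζ) / p ζ)
      (((0 - deriv p z₀) * p z₀ - (1 - p z₀) * deriv p z₀) / p z₀ ^ 2) z₀ :=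
    hc1.div hpz₀d.hasDerivAt hPne
  have hderivw : deriv w z₀ = -(deriv p z₀) / (p z₀) ^ 2 := by
    rw [hwdef, hdivfull.deriv, div_eq_div_iff (pow_ne_zero 2 hPne) (pow_ne_zero 2 hPne)]
    ring
  rw [hderivw, hwval z₀] at hkeq
  -- `hkeq : z₀ * (-(deriv p z₀) / p z₀ ^ 2) = k * ((1 - p z₀) / p z₀)`
  have hfin1 : z₀ * deriv p z₀ = -(k:ℂ) * (1 - p z₀) * p z₀ := by
    have e1 : z₀ * (-(deriv p z₀) / (p z₀) ^ 2) * (p z₀) ^ 2 = -(z₀ * deriv p z₀) := by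
      field_simp
    have e2 : (k:ℂ) * ((1 - p z₀) / p z₀) * (p z₀) ^ 2 = (k:ℂ) * (1 - p z₀) * p z₀ := by
      field_simp
    have h2 := congrArg (fun x : ℂ => x * (p z₀) ^ 2) hkeq
    rw [e1, e2] at h2
    linear_combination -h2
  have hfinal : z₀ * deriv p z₀ / p z₀ = -(k:ℂ) * (1 - p z₀) := by
    rw [div_eq_iff hPne]
    linear_combination hfin1
  -- the key identity  1 + z₀ f''/f' = p + z₀ p' / p
  have hfd₀ : DifferentiableAt ℂ f z₀ :=
    hd.differentiableAt (isOpen_ball.mem_nhds (mem_ball_zero_iff.mpr hρ1))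
  have hfd'₀ : HasDerivAt (deriv f) (deriv (deriv f) z₀) z₀ :=
    (hdifff' z₀ hρ1).hasDerivAt
  have h1 : HasDerivAt (fun ζ => p ζ * f ζ)
      (deriv p z₀ * f z₀ + p z₀ * deriv f z₀) z₀ :=
    hpz₀d.hasDerivAt.mul hfd₀.hasDerivAt
  have h2 : HasDerivAt (fun ζ => ζ * deriv f ζ)
      (1 * deriv f z₀ + z₀ * deriv (deriv f) z₀) z₀ :=
    (hasDerivAt_id z₀).mul hfd'₀
  have heq : (fun ζ => ζ * deriv f ζ) =ᶠ[𝓝 z₀] (fun ζ => p ζ * f ζ) := by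
    have hev : ∀ᶠ ζ in 𝓝 z₀, g ζ ≠ 0 :=
      (hdiffg z₀ hρ1).continuousAt.eventually_ne hgz₀
    filter_upwards [hev] with ζ hζ
    rw [hfzg ζ, hpval ζ]
    field_simp
  have huniq : deriv p z₀ * f z₀ + p z₀ * deriv f z₀
      = 1 * deriv f z₀ + z₀ * deriv (deriv f) z₀ :=
    (h1.congr_of_eventuallyEq heq).unique h2
  have hfPz : f z₀ * p z₀ = z₀ * deriv f z₀ := by
    rw [hfzg z₀, hpval z₀]
    field_simp
  have hf'ne : deriv f z₀ ≠ 0 := hdne z₀ (mem_ball_zero_iff.mpr hρ1)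
  have hEid : 1 + z₀ * deriv (deriv f) z₀ / deriv f z₀
      = p z₀ + z₀ * deriv p z₀ / p z₀ := by
    have hmul : (1 + z₀ * deriv (deriv f) z₀ / deriv f z₀) * (deriv f z₀ * p z₀)
        = (p z₀ + z₀ * deriv p z₀ / p z₀) * (deriv f z₀ * p z₀) := by
      have e1 : (1 + z₀ * deriv (deriv f) z₀ / deriv f z₀) * (deriv f z₀ * p z₀)
          = deriv f z₀ * p z₀ + z₀ * deriv (deriv f) z₀ * p z₀ := by
        field_simp
      have e2 : (p z₀ + z₀ * deriv p z₀ / p z₀) * (deriv f z₀ * p z₀)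
          = p z₀ ^ 2 * deriv f z₀ + z₀ * deriv p z₀ * deriv f z₀ := by
        field_simp
      rw [e1, e2]
      linear_combination (-(p z₀)) * huniq + deriv p z₀ * hfPz
    exact mul_right_cancel₀ (mul_ne_zero hf'ne hPne) hmul
  have hEpos := hconv z₀ (mem_ball_zero_iff.mpr hρ1)
  rw [hEid, hfinal] at hEpos
  have hcompute : (p z₀ + -(k:ℂ) * (1 - p z₀)).re = (1 + k) * (p z₀).re - k := by
    simp only [Complex.add_re, Complex.mul_re, Complex.neg_re, Complex.neg_im,
      Complex.sub_re, Complex.sub_im, Complex.ofReal_re, Complex.ofReal_im,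
      Complex.one_re, Complex.one_im]
    ring
  rw [hcompute, hre] at hEpos
  linarith
end Main

end MarxStrohhacker

/-- for convex `f`, `Re (z f'(z)/f(z)) > 1/2` on the unit disk
(the value at `z = 0` being interpreted as `1`). -/
theorem stmt_9 (f : ℂ → ℂ) (hf : Kclass f) :
    ∀ z ∈ ball (0:ℂ) 1,
      1 / 2 < (if z = 0 then 1 else (z * deriv f z / f z)).re := by
  obtain ⟨⟨hd, hf0, hd0, hdne⟩, hconv⟩ := hf
  intro z hz
  by_cases hz0 : z = 0
  · rw [if_pos hz0]
    norm_num
  rw [if_neg hz0]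
  by_contra hcon
  push_neg at hcon
  exact ms_main hd hf0 hd0 hdne hconv (mem_ball_zero_iff.mp hz) hz0 hcon
end

section
/- If f is a convex function on the unit disk, then for every 0 ≤ r < 1 and 0 ≤ θ₁ < θ₂ ≤ 2π, (θ₂ - θ₁)/2 < ∫_{θ₁}^{θ₂} Re(z f'(z)/f(z)) dθ ≤ π + (θ₂ - θ₁)/2 where z = r e^{iθ}. -/
open Complex Metric Real

noncomputable def ww (f : ℂ → ℂ) (z : ℂ) : ℂ := 1 - dslope f 0 z / deriv f z

section setup
variable {f : ℂ → ℂ} (hd : DifferentiableOn ℂ f (ball 0 1)) (h0 : f 0 = 0)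
  (h1 : deriv f 0 = 1) (hd' : ∀ z ∈ ball (0:ℂ) 1, deriv f z ≠ 0)

lemma ww_zero (h1 : deriv f 0 = 1) : ww f 0 = 0 := by
  simp [ww, dslope_same, h1]

lemma ww_ne_zero_eq (h0 : f 0 = 0) {z : ℂ} (hz : z ≠ 0) :
    ww f z = 1 - f z / (z * deriv f z) := by
  rw [ww, dslope_of_ne _ hz, slope_def_field, h0, sub_zero, sub_zero, div_div]

include hd hd' in
lemma ww_diffOn : DifferentiableOn ℂ (ww f) (ball 0 1) := by
  have hA : AnalyticOnNhd ℂ f (ball 0 1) := hd.analyticOnNhd isOpen_ball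
  have hdf : DifferentiableOn ℂ (deriv f) (ball 0 1) :=
    (hA.deriv).differentiableOn
  have hds : DifferentiableOn ℂ (dslope f 0) (ball 0 1) :=
    (differentiableOn_dslope (isOpen_ball.mem_nhds (by simp))).2 hd
  exact (differentiableOn_const 1).sub (hds.div hdf hd')
end setup

section key
variable {f : ℂ → ℂ} (hd : DifferentiableOn ℂ f (ball 0 1)) (h0 : f 0 = 0)
  (h1 : deriv f 0 = 1) (hd' : ∀ z ∈ ball (0:ℂ) 1, deriv f z ≠ 0)

include hd h0 hd' in
lemma ww_key {z : ℂ} (hz : z ∈ ball (0:ℂ) 1) (hz0 : z ≠ 0) :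
    (1 - ww f z) * (1 + z * deriv (deriv f) z / deriv f z) = 1 + z * deriv (ww f) z := by
  have hA : AnalyticOnNhd ℂ f (ball 0 1) := hd.analyticOnNhd isOpen_ball
  have hfz : HasDerivAt f (deriv f z) z :=
    ((hd.differentiableAt (isOpen_ball.mem_nhds hz)).hasDerivAt)
  have hf'z : HasDerivAt (deriv f) (deriv (deriv f) z) z :=
    (((hA.deriv).differentiableOn.differentiableAt (isOpen_ball.mem_nhds hz)).hasDerivAt)
  set a := deriv f z with ha
  set b := deriv (deriv f) z with hb
  have hane : a ≠ 0 := hd' z hz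
  -- derivative of the denominator y * deriv f y
  have hden : HasDerivAt (fun y => y * deriv f y) (a + z * b) z := by
    have := (hasDerivAt_id' z).mul hf'z; rw [one_mul] at this; exact this
  have hdenne : z * a ≠ 0 := mul_ne_zero hz0 hane
  have hq : HasDerivAt (fun y => 1 - f y / (y * deriv f y))
      (-((a * (z * a) - f z * (a + z * b)) / (z * a) ^ 2)) z := by
    simpa using ((hfz.div hden hdenne)).const_sub 1
  have hww : HasDerivAt (ww f) (-((a * (z * a) - f z * (a + z * b)) / (z * a) ^ 2)) z := by
    refine hq.congr_of_eventuallyEq ?_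
    have hmem : (ball (0:ℂ) 1 \ {0}) ∈ nhds z :=
      (isOpen_ball.sdiff isClosed_singleton).mem_nhds ⟨hz, hz0⟩
    filter_upwards [hmem] with y hy
    rw [ww_ne_zero_eq h0 hy.2]
  rw [hww.deriv, ww_ne_zero_eq h0 hz0, ← ha]
  field_simp
  ring
end key

section jack
variable {f : ℂ → ℂ} (hd : DifferentiableOn ℂ f (ball 0 1)) (h0 : f 0 = 0)
  (h1 : deriv f 0 = 1) (hd' : ∀ z ∈ ball (0:ℂ) 1, deriv f z ≠ 0)

include hd h0 h1 hd' in
lemma ww_lt_one (hK : ∀ z ∈ ball (0:ℂ) 1, 0 < (1 + z * deriv (deriv f) z / deriv f z).re) :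
    ∀ z ∈ ball (0:ℂ) 1, ‖ww f z‖ < 1 := by
  by_contra hcon
  push_neg at hcon
  obtain ⟨z0, hz0b, hz0⟩ := hcon
  have hw : DifferentiableOn ℂ (ww f) (ball 0 1) := ww_diffOn hd hd'
  have hwc : ∀ z ∈ ball (0:ℂ) 1, ContinuousAt (ww f) z := fun z hz =>
    (hw.differentiableAt (isOpen_ball.mem_nhds hz)).continuousAt
  have hz0abs : ‖z0‖ < 1 := by simpa [mem_ball, Complex.dist_eq] using hz0b
  set K : Set ℂ := closedBall 0 (‖z0‖) with hK'
  have hKsub : K ⊆ ball (0:ℂ) 1 := closedBall_subset_ball hz0abs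
  set C : Set ℂ := {z | z ∈ K ∧ 1 ≤ ‖ww f z‖} with hC'
  have hCne : C.Nonempty := ⟨z0, by simp [hK'], hz0⟩
  have hCclosed : IsClosed C := by
    rw [← isSeqClosed_iff_isClosed]
    intro x p hx hlim
    have hpK : p ∈ K := Metric.isClosed_closedBall.isSeqClosed (fun n => (hx n).1) hlim
    refine ⟨hpK, ?_⟩
    have htend : Filter.Tendsto (fun n => ‖ww f (x n)‖) Filter.atTop
        (nhds (‖ww f p‖)) :=
      (continuous_norm.continuousAt.comp (hwc p (hKsub hpK))).tendsto.comp hlim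
    exact ge_of_tendsto htend (Filter.Eventually.of_forall fun n => (hx n).2)
  have hCcomp : IsCompact C :=
    (isCompact_closedBall _ _).of_isClosed_subset hCclosed fun z hz => hz.1
  obtain ⟨z1, hz1C, hz1min⟩ := hCcomp.exists_isMinOn hCne continuous_norm.continuousOn
  set r0 : ℝ := ‖z1‖ with hr0'
  have hz1K : z1 ∈ K := hz1C.1
  have hz1w : 1 ≤ ‖ww f z1‖ := hz1C.2
  have hr0lt : r0 < 1 := lt_of_le_of_lt (by simpa [hK', Complex.dist_eq] using hz1K) hz0abs
  have hz1b : z1 ∈ ball (0:ℂ) 1 := by simpa [mem_ball, Complex.dist_eq] using hr0lt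
  have hz1ne : z1 ≠ 0 := by
    intro h
    rw [h, ww_zero h1] at hz1w
    norm_num at hz1w
  have hr0pos : 0 < r0 := by
    simpa [hr0'] using (norm_pos_iff.mpr hz1ne)
  have hlt : ∀ z : ℂ, ‖z‖ < r0 → ‖ww f z‖ < 1 := by
    intro z hzr
    by_contra hge
    push_neg at hge
    have hzK : z ∈ K := by
      have : r0 ≤ ‖z0‖ := by simpa [hK', Complex.dist_eq] using hz1K
      simp only [hK', mem_closedBall, Complex.dist_eq, sub_zero]
      linarith
    have := hz1min (⟨hzK, hge⟩ : z ∈ C)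
    simp only [hr0'] at this
    exact absurd (lt_of_lt_of_le hzr this) (lt_irrefl _)
  have habs1 : ‖ww f z1‖ = 1 := by
    rcases eq_or_lt_of_le hz1w with h | h
    · exact h.symm
    · exfalso
      set φ : ℝ → ℝ := fun t => ‖ww f ((t:ℂ) * z1)‖ with hφ'
      have hmem : ∀ t : ℝ, t ∈ Set.Icc (0:ℝ) 1 → ((t:ℂ) * z1) ∈ ball (0:ℂ) 1 := by
        intro t ht
        simp only [mem_ball, Complex.dist_eq, sub_zero, norm_mul, Complex.norm_real, Real.norm_eq_abs]
        have h1' : |t| ≤ 1 := abs_le.2 ⟨by linarith [ht.1], ht.2⟩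
        have h2' : ‖z1‖ < 1 := hr0' ▸ hr0lt
        nlinarith [norm_nonneg z1]
      have hφcont : ContinuousOn φ (Set.Icc 0 1) := by
        intro t ht
        have hinner : ContinuousAt (fun x : ℝ => (x:ℂ) * z1) t :=
          (Complex.continuous_ofReal.mul continuous_const).continuousAt
        exact ((continuous_norm.continuousAt.comp
          (ContinuousAt.comp (g := ww f) (f := fun x : ℝ => (x:ℂ) * z1) (x := t) (hwc _ (hmem t ht)) hinner))).continuousWithinAt
      have h0' : φ 0 = 0 := by simp [hφ', ww_zero h1]
      have hival : (1:ℝ) ∈ Set.Icc (φ 0) (φ 1) := by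
        constructor
        · rw [h0']; norm_num
        · simp only [hφ', Complex.ofReal_one, one_mul]; exact h.le
      obtain ⟨t, ht, htv⟩ := intermediate_value_Icc (by norm_num : (0:ℝ) ≤ 1) hφcont hival
      have ht1 : t ≠ 1 := by
        intro hh
        rw [hh] at htv
        simp only [hφ', Complex.ofReal_one, one_mul] at htv
        rw [htv] at h; exact lt_irrefl _ h
      have htlt : t < 1 := lt_of_le_of_ne ht.2 ht1
      have : ‖(t:ℂ) * z1‖ < r0 := by
        simp only [norm_mul, Complex.norm_real, Real.norm_eq_abs, hr0']
        rw [_root_.abs_of_nonneg ht.1]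
        nlinarith
      have hcontr := hlt _ this
      have hc2 : φ t < 1 := hcontr
      rw [htv] at hc2
      exact lt_irrefl _ hc2
  have hle : ∀ z : ℂ, ‖z‖ ≤ r0 → ‖ww f z‖ ≤ 1 := by
    intro z hzle
    rcases lt_or_eq_of_le hzle with h | h
    · exact (hlt z h).le
    · have hzb : z ∈ ball (0:ℂ) 1 := by simp [mem_ball, Complex.dist_eq]; rw [h]; exact hr0lt
      have htend : Filter.Tendsto (fun t : ℝ => ‖ww f ((t:ℂ) * z)‖)
          (nhdsWithin 1 (Set.Iio 1)) (nhds (‖ww f z‖)) := by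
        have hcont : ContinuousAt (fun t : ℝ => ‖ww f ((t:ℂ) * z)‖) 1 := by
          have hinner : ContinuousAt (fun x : ℝ => (x:ℂ) * z) 1 :=
            (Complex.continuous_ofReal.mul continuous_const).continuousAt
          have hmid : ContinuousAt (ww f) (((1:ℝ):ℂ) * z) := by simpa using hwc z hzb
          exact continuous_norm.continuousAt.comp
            (ContinuousAt.comp (g := ww f) (f := fun x : ℝ => (x:ℂ) * z) (x := (1:ℝ)) hmid hinner)
        have := hcont.tendsto
        simp only [Complex.ofReal_one, one_mul] at this
        exact this.mono_left nhdsWithin_le_nhds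
      refine le_of_tendsto htend ?_
      filter_upwards [Ioo_mem_nhdsLT_of_mem (⟨by norm_num, le_refl (1:ℝ)⟩ : (1:ℝ) ∈ Set.Ioc 0 1)]
        with t ht
      refine (hlt _ ?_).le
      simp only [norm_mul, Complex.norm_real, Real.norm_eq_abs]
      rw [_root_.abs_of_nonneg ht.1.le, ← h]
      nlinarith [ht.2, ht.1, norm_pos_iff.mpr (show z ≠ 0 by intro hh; rw [hh] at h; simp at h; linarith)]
  have hschwarz : ∀ z : ℂ, ‖z‖ < r0 → ‖ww f z‖ ≤ ‖z‖ / r0 := by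
    intro z hz
    have hmaps : Set.MapsTo (ww f) (ball 0 r0) (ball (ww f 0) 1) := by
      intro y hy
      rw [ww_zero h1]
      simp only [mem_ball, Complex.dist_eq, sub_zero] at hy ⊢
      exact hlt y hy
    have hsub : ball (0:ℂ) r0 ⊆ ball 0 1 := ball_subset_ball hr0lt.le
    have := Complex.dist_le_div_mul_dist_of_mapsTo_ball (hw.mono hsub) (hmaps.mono_right ball_subset_closedBall)
      (by simpa [mem_ball, Complex.dist_eq] using hz)
    rw [ww_zero h1] at this
    rw [div_eq_inv_mul]
    simpa [Complex.dist_eq] using this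
  -- derivative setup at z1
  have hWd : HasDerivAt (ww f) (deriv (ww f) z1) z1 :=
    (hw.differentiableAt (isOpen_ball.mem_nhds hz1b)).hasDerivAt
  set W1 : ℂ := ww f z1 with hW1
  set W1' : ℂ := deriv (ww f) z1 with hW1d
  set c0 : ℂ := (starRingEnd ℂ) W1 * (W1' * z1) with hc0
  have hnormW1 : W1.re * W1.re + W1.im * W1.im = 1 := by
    have := Complex.normSq_eq_norm_sq W1
    rw [habs1] at this
    simpa [Complex.normSq_apply] using this
  -- radial : 1 ≤ c0.re
  have hradial : 1 ≤ c0.re := by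
    have hWd1 : HasDerivAt (ww f) W1' ((1:ℂ) * z1) := by rw [one_mul]; exact hWd
    have hmul : HasDerivAt (fun s : ℂ => s * z1) z1 1 := hasDerivAt_mul_const z1
    have hcomp : HasDerivAt (fun s : ℂ => ww f (s * z1)) (W1' * z1) 1 := by
      have := HasDerivAt.comp (1:ℂ) hWd1 hmul; exact this
    have hF : HasDerivAt (fun s : ℂ => (starRingEnd ℂ) W1 * ww f (s * z1))
        ((starRingEnd ℂ) W1 * (W1' * z1)) 1 := by
      simpa using hcomp.const_mul ((starRingEnd ℂ) W1)
    have hreal : HasDerivAt (fun t : ℝ => (starRingEnd ℂ) W1 * ww f ((t:ℂ) * z1)) c0 1 :=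
      hF.comp_ofReal
    set φ : ℝ → ℝ := fun t : ℝ => ((starRingEnd ℂ) W1 * ww f ((t:ℂ) * z1)).re with hφdef
    have hφd : HasDerivAt φ c0.re 1 :=
      Complex.reCLM.hasFDerivAt.comp_hasDerivAt 1 hreal
    have hφ1 : φ 1 = 1 := by
      simp only [hφdef, Complex.ofReal_one, one_mul]
      rw [mul_comm, Complex.mul_conj]
      rw [Complex.normSq_eq_norm_sq, habs1]
      norm_num
    have hφle : ∀ t ∈ Set.Ioo (0:ℝ) 1, φ t ≤ t := by
      intro t ht
      have h1 : φ t ≤ ‖(starRingEnd ℂ) W1 * ww f ((t:ℂ) * z1)‖ :=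
        Complex.re_le_norm _
      have h2 : ‖(starRingEnd ℂ) W1 * ww f ((t:ℂ) * z1)‖
          = ‖ww f ((t:ℂ) * z1)‖ := by
        rw [norm_mul, Complex.norm_conj, habs1, one_mul]
      have h3 : ‖(t:ℂ) * z1‖ < r0 := by
        simp only [norm_mul, Complex.norm_real, Real.norm_eq_abs, _root_.abs_of_nonneg ht.1.le]
        nlinarith [ht.2, ht.1, hr0pos]
      have h4 := hschwarz _ h3
      have h5 : ‖(t:ℂ) * z1‖ / r0 = t * (r0 / r0) := by
        simp only [norm_mul, Complex.norm_real, Real.norm_eq_abs, _root_.abs_of_nonneg ht.1.le]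
        ring
      rw [h5, div_self (ne_of_gt hr0pos), mul_one] at h4
      calc φ t ≤ _ := h1
        _ = _ := h2
        _ ≤ t := h4
    have hslope := hasDerivAt_iff_tendsto_slope.mp hφd
    have hsub : Set.Iio (1:ℝ) ⊆ {(1:ℝ)}ᶜ := fun x hx => (Set.mem_Iio.mp hx).ne
    have hslope' := hslope.mono_left (nhdsWithin_mono 1 hsub)
    refine ge_of_tendsto hslope' ?_
    filter_upwards [Ioo_mem_nhdsLT_of_mem (⟨zero_lt_one, le_refl (1:ℝ)⟩ : (1:ℝ) ∈ Set.Ioc 0 1)]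
      with t ht
    have h1t : t - 1 < 0 := by linarith [ht.2]
    rw [slope_def_field, hφ1, le_div_iff_of_neg h1t]
    have := hφle t ht
    linarith
  -- tangential : c0.im = 0
  have htang : c0.im = 0 := by
    have hWd1 : HasDerivAt (ww f) W1' (Complex.exp ((0:ℂ) * I) * z1) := by
      simpa using hWd
    have hE : HasDerivAt (fun s : ℂ => Complex.exp (s * I) * z1) (I * z1) 0 := by
      have h1' : HasDerivAt (fun s : ℂ => s * I) I 0 := hasDerivAt_mul_const I
      have h2' := (h1'.cexp).mul_const z1
      simpa using h2'
    have hGc : HasDerivAt (fun s : ℂ => ww f (Complex.exp (s * I) * z1)) (W1' * (I * z1)) 0 := by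
      have := HasDerivAt.comp (0:ℂ) hWd1 hE; exact this
    have hGr : HasDerivAt (fun t : ℝ => ww f (Complex.exp ((t:ℂ) * I) * z1))
        (W1' * (I * z1)) 0 := by
      have := hGc.comp_ofReal
      simpa using this
    set G : ℝ → ℂ := fun t : ℝ => ww f (Complex.exp ((t:ℂ) * I) * z1) with hGdef
    set g' : ℂ := W1' * (I * z1) with hg'
    have hre : HasDerivAt (fun t => (G t).re) g'.re 0 :=
      Complex.reCLM.hasFDerivAt.comp_hasDerivAt 0 hGr
    have him : HasDerivAt (fun t => (G t).im) g'.im 0 :=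
      Complex.imCLM.hasFDerivAt.comp_hasDerivAt 0 hGr
    set ψ : ℝ → ℝ := fun t => (G t).re * (G t).re + (G t).im * (G t).im with hψdef
    have hG0 : G 0 = W1 := by simp [hGdef, hW1]
    have hψd : HasDerivAt ψ
        (g'.re * (G 0).re + (G 0).re * g'.re + (g'.im * (G 0).im + (G 0).im * g'.im)) 0 :=
      (hre.mul hre).add (him.mul him)
    have hψle : ∀ t : ℝ, ψ t ≤ ψ 0 := by
      intro t
      have habsG : ‖G t‖ ≤ 1 := by
        apply hle
        simp only [hGdef, norm_mul]
        rw [Complex.norm_exp_ofReal_mul_I, one_mul]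
      have h1' : ψ t = Complex.normSq (G t) := by rw [hψdef]; rfl
      have h2' : ψ 0 = 1 := by
        rw [hψdef]
        simp only []
        rw [hG0] at *
        exact hnormW1
      rw [h1', h2', Complex.normSq_eq_norm_sq]
      nlinarith [norm_nonneg (G t)]
    have hloc : IsLocalMax ψ 0 := Filter.Eventually.of_forall hψle
    have hzero := hloc.hasDerivAt_eq_zero hψd
    rw [hG0] at hzero
    -- conj W1 * g' has zero real part
    have hconjre : ((starRingEnd ℂ) W1 * g').re = 0 := by
      simp only [Complex.mul_re, Complex.conj_re, Complex.conj_im]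
      nlinarith [hzero]
    have hrel : (starRingEnd ℂ) W1 * g' = I * c0 := by
      rw [hg', hc0]; ring
    rw [hrel] at hconjre
    simpa using hconjre
  -- final contradiction using the key identity
  have hkey := ww_key hd h0 hd' hz1b hz1ne
  have hp := hK z1 hz1b
  have hWW : W1 * (starRingEnd ℂ) W1 = 1 := by
    rw [Complex.mul_conj, Complex.normSq_eq_norm_sq, habs1]
    norm_num
  have hzW : z1 * W1' = c0 * W1 := by
    have h' : c0 * W1 = (W1 * (starRingEnd ℂ) W1) * (z1 * W1') := by rw [hc0]; ring
    rw [h', hWW, one_mul]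
  have hkey' : (1 - W1) * (1 + z1 * deriv (deriv f) z1 / deriv f z1) = 1 + z1 * W1' := hkey
  rcases eq_or_ne W1 1 with hW1e | hW1ne
  · rw [hW1e] at hkey' hWW hzW
    have hc0e : (1:ℂ) + c0 = 0 := by
      rw [mul_one] at hzW
      rw [← hzW, ← hkey']
      ring
    have : c0 = -1 := by linear_combination hc0e
    rw [this] at hradial
    norm_num at hradial
  · have hid : ((1:ℂ) - W1) * ((1:ℂ) - (starRingEnd ℂ) W1)
        * (1 + z1 * deriv (deriv f) z1 / deriv f z1)
        = (1 + c0 * W1) * (1 - (starRingEnd ℂ) W1) := by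
      rw [show ((1:ℂ) - W1) * ((1:ℂ) - (starRingEnd ℂ) W1)
          * (1 + z1 * deriv (deriv f) z1 / deriv f z1)
          = ((1 - W1) * (1 + z1 * deriv (deriv f) z1 / deriv f z1))
            * (1 - (starRingEnd ℂ) W1) by ring, hkey', hzW]
    have hlhs : ((1:ℂ) - W1) * ((1:ℂ) - (starRingEnd ℂ) W1)
        = (Complex.normSq (1 - W1) : ℝ) := by
      have : ((1:ℂ) - (starRingEnd ℂ) W1) = (starRingEnd ℂ) (1 - W1) := by
        simp [map_sub]
      rw [this, Complex.mul_conj]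
    rw [hlhs] at hid
    have hre_eq := congrArg Complex.re hid
    have hns : 0 < Complex.normSq (1 - W1) := by
      rw [Complex.normSq_pos]
      intro hcon
      apply hW1ne
      have := sub_eq_zero.mp hcon
      exact this.symm
    have hxle : W1.re ≤ 1 := by nlinarith [hnormW1]
    have hlhsre : ((Complex.normSq (1 - W1) : ℂ)
        * (1 + z1 * deriv (deriv f) z1 / deriv f z1)).re
        = Complex.normSq (1 - W1) * (1 + z1 * deriv (deriv f) z1 / deriv f z1).re := by
      simp [Complex.mul_re]
    rw [hlhsre] at hre_eq
    have hrhsre : ((1 + c0 * W1) * (1 - (starRingEnd ℂ) W1)).re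
        = (1 - c0.re) * (1 - W1.re) := by
      simp only [Complex.mul_re, Complex.mul_im, Complex.add_re, Complex.add_im,
        Complex.sub_re, Complex.sub_im, Complex.one_re, Complex.one_im,
        Complex.conj_re, Complex.conj_im, htang]
      nlinarith [hnormW1, htang]
    rw [hrhsre] at hre_eq
    nlinarith [hp, hns, hxle, hradial, hre_eq]
end jack

noncomputable def gg (f : ℂ → ℂ) (z : ℂ) : ℂ := (dslope f 0 z / deriv f z)⁻¹

section conseq
variable {f : ℂ → ℂ} (hd : DifferentiableOn ℂ f (ball 0 1)) (h0 : f 0 = 0)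
  (h1 : deriv f 0 = 1) (hd' : ∀ z ∈ ball (0:ℂ) 1, deriv f z ≠ 0)
  (hK : ∀ z ∈ ball (0:ℂ) 1, 0 < (1 + z * deriv (deriv f) z / deriv f z).re)

include hd h0 h1 hd' hK in
lemma uu_ne : ∀ z ∈ ball (0:ℂ) 1, dslope f 0 z / deriv f z ≠ 0 := by
  intro z hz hcon
  have hw := ww_lt_one hd h0 h1 hd' hK z hz
  have : ww f z = 1 := by rw [ww, hcon, sub_zero]
  rw [this] at hw
  simp at hw

include hd h0 h1 hd' hK in
lemma gg_diffOn : DifferentiableOn ℂ (gg f) (ball 0 1) := by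
  have hA : AnalyticOnNhd ℂ f (ball 0 1) := hd.analyticOnNhd isOpen_ball
  have hdf : DifferentiableOn ℂ (deriv f) (ball 0 1) := (hA.deriv).differentiableOn
  have hds : DifferentiableOn ℂ (dslope f 0) (ball 0 1) :=
    (differentiableOn_dslope (isOpen_ball.mem_nhds (by simp))).2 hd
  exact (hds.div hdf hd').inv (uu_ne hd h0 h1 hd' hK)

include hd h0 h1 hd' hK in
lemma gg_re_gt : ∀ z ∈ ball (0:ℂ) 1, 1/2 < (gg f z).re := by
  intro z hz
  have hw := ww_lt_one hd h0 h1 hd' hK z hz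
  set u : ℂ := dslope f 0 z / deriv f z with hu
  have hueq : u = 1 - ww f z := by rw [ww]; ring
  have hne : u ≠ 0 := uu_ne hd h0 h1 hd' hK z hz
  have hns : 0 < Complex.normSq u := Complex.normSq_pos.2 hne
  have hgg : (gg f z) = u⁻¹ := rfl
  rw [hgg, Complex.inv_re]
  have hw2 : Complex.normSq (ww f z) < 1 := by
    rw [Complex.normSq_eq_norm_sq]
    nlinarith [norm_nonneg (ww f z)]
  have hure : u.re = 1 - (ww f z).re := by rw [hueq]; simp
  have huim : u.im = -(ww f z).im := by rw [hueq]; simp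
  have hnsu : Complex.normSq u = (1 - (ww f z).re)^2 + ((ww f z).im)^2 := by
    rw [Complex.normSq_apply, hure, huim]; ring
  rw [hure, lt_div_iff₀ hns, hnsu]
  rw [Complex.normSq_apply] at hw2
  nlinarith [hw2]

include hd h0 h1 hd' hK in
lemma f_ne_zero : ∀ z ∈ ball (0:ℂ) 1, z ≠ 0 → f z ≠ 0 := by
  intro z hz hz0 hcon
  have := uu_ne hd h0 h1 hd' hK z hz
  apply this
  rw [dslope_of_ne _ hz0, slope_def_field, hcon, h0]
  simp

include hd h0 h1 hd' hK in
lemma gg_eq : ∀ z ∈ ball (0:ℂ) 1, z ≠ 0 → gg f z = z * deriv f z / f z := by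
  intro z hz hz0
  have hfne := f_ne_zero hd h0 h1 hd' hK z hz hz0
  have hdne := hd' z hz
  rw [gg, dslope_of_ne _ hz0, slope_def_field, h0, sub_zero, sub_zero]
  field_simp

include h1 in
omit h0 hd' hK in
lemma gg_zero : gg f 0 = 1 := by
  rw [gg, dslope_same, h1]
  norm_num
end conseq

section meanvalue
variable {f : ℂ → ℂ} (hd : DifferentiableOn ℂ f (ball 0 1)) (h0 : f 0 = 0)
  (h1 : deriv f 0 = 1) (hd' : ∀ z ∈ ball (0:ℂ) 1, deriv f z ≠ 0)
  (hK : ∀ z ∈ ball (0:ℂ) 1, 0 < (1 + z * deriv (deriv f) z / deriv f z).re)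

include hd h0 h1 hd' hK in
lemma gg_circle_cont {r : ℝ} (hr0 : 0 < r) (hr1 : r < 1) :
    Continuous (fun θ : ℝ => gg f (circleMap 0 r θ)) := by
  have hgd := gg_diffOn hd h0 h1 hd' hK
  refine continuous_iff_continuousAt.2 fun θ => ?_
  have hmem : circleMap 0 r θ ∈ ball (0:ℂ) 1 := by
    simp only [mem_ball, Complex.dist_eq, sub_zero, norm_circleMap_zero]
    rw [_root_.abs_of_pos hr0]; exact hr1
  exact ContinuousAt.comp (g := gg f) (f := fun θ : ℝ => circleMap 0 r θ) (x := θ)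
    ((hgd.differentiableAt (isOpen_ball.mem_nhds hmem)).continuousAt)
    (continuous_circleMap 0 r).continuousAt

include hd h0 h1 hd' hK in
lemma gg_integral {r : ℝ} (hr0 : 0 < r) (hr1 : r < 1) :
    ∫ θ in (0:ℝ)..(2*π), (gg f (circleMap 0 r θ)).re = 2 * π := by
  have hgd := gg_diffOn hd h0 h1 hd' hK
  have hsub : closure (ball (0:ℂ) r) ⊆ ball (0:ℂ) 1 := by
    rw [closure_ball (0:ℂ) (ne_of_gt hr0)]
    exact closedBall_subset_ball hr1
  have hdc : DiffContOnCl ℂ (gg f) (ball 0 r) :=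
    DifferentiableOn.diffContOnCl (hgd.mono hsub)
  have hcih := hdc.circleIntegral_sub_inv_smul (w := 0) (by simp [hr0])
  rw [gg_zero h1] at hcih
  rw [circleIntegral] at hcih
  simp only [deriv_circleMap, smul_eq_mul, sub_zero] at hcih
  have hne : ∀ θ : ℝ, circleMap 0 r θ ≠ 0 := fun θ => circleMap_ne_center (ne_of_gt hr0)
  have hcongr : (∫ θ in (0:ℝ)..(2*π), circleMap 0 r θ * I * ((circleMap 0 r θ)⁻¹
      * gg f (circleMap 0 r θ)))
      = ∫ θ in (0:ℝ)..(2*π), I * gg f (circleMap 0 r θ) := by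
    apply intervalIntegral.integral_congr
    intro θ _
    field_simp [hne θ]
  rw [hcongr] at hcih
  rw [intervalIntegral.integral_const_mul] at hcih
  have hI : (I : ℂ) ≠ 0 := I_ne_zero
  have hint : (∫ θ in (0:ℝ)..(2*π), gg f (circleMap 0 r θ)) = 2 * π := by
    apply mul_left_cancel₀ hI
    rw [hcih]; ring
  have hii : IntervalIntegrable (fun θ : ℝ => gg f (circleMap 0 r θ)) MeasureTheory.volume 0 (2*π) :=
    (gg_circle_cont hd h0 h1 hd' hK hr0 hr1).intervalIntegrable 0 (2*π)
  have := Complex.reCLM.intervalIntegral_comp_comm hii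
  simp only [Complex.reCLM_apply] at this
  rw [this, hint]
  norm_num
end meanvalue

/-- for convex `f`, `0 ≤ r < 1` and `0 ≤ θ₁ < θ₂ ≤ 2π`,
`(θ₂ - θ₁)/2 < ∫_{θ₁}^{θ₂} Re (z f'(z)/f(z)) dθ ≤ π + (θ₂ - θ₁)/2` with `z = r e^{iθ}`
(the integrand being interpreted as `1` at `z = 0`). -/
theorem stmt_10 (f : ℂ → ℂ) (hf : Kclass f)
    (r : ℝ) (hr0 : 0 ≤ r) (hr1 : r < 1)
    (θ₁ θ₂ : ℝ) (h1 : 0 ≤ θ₁) (h12 : θ₁ < θ₂) (h2 : θ₂ ≤ 2 * π) :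
    (θ₂ - θ₁) / 2 <
        (∫ θ in θ₁..θ₂,
          (if ((r : ℂ) * Complex.exp (θ * Complex.I)) = 0 then 1 else
            (((r : ℂ) * Complex.exp (θ * Complex.I))
              * deriv f ((r : ℂ) * Complex.exp (θ * Complex.I))
              / f ((r : ℂ) * Complex.exp (θ * Complex.I)))).re)
      ∧
      (∫ θ in θ₁..θ₂,
          (if ((r : ℂ) * Complex.exp (θ * Complex.I)) = 0 then 1 else
            (((r : ℂ) * Complex.exp (θ * Complex.I))
              * deriv f ((r : ℂ) * Complex.exp (θ * Complex.I))
              / f ((r : ℂ) * Complex.exp (θ * Complex.I)))).re)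
        ≤ π + (θ₂ - θ₁) / 2 := by
  obtain ⟨⟨hd, h0, h1', hd'⟩, hK⟩ := hf
  by_cases hr : r = 0
  · subst hr
    have hsimp : (∫ θ in θ₁..θ₂,
        (if ((0:ℝ) : ℂ) * Complex.exp (θ * Complex.I) = 0 then 1 else
          ((((0:ℝ):ℂ) * Complex.exp (θ * Complex.I))
            * deriv f ((((0:ℝ):ℂ)) * Complex.exp (θ * Complex.I))
            / f ((((0:ℝ):ℂ)) * Complex.exp (θ * Complex.I)))).re)
        = θ₂ - θ₁ := by
      have : ∀ θ : ℝ, (if ((0:ℝ) : ℂ) * Complex.exp (θ * Complex.I) = 0 then (1:ℂ) else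
          ((((0:ℝ):ℂ) * Complex.exp (θ * Complex.I))
            * deriv f ((((0:ℝ):ℂ)) * Complex.exp (θ * Complex.I))
            / f ((((0:ℝ):ℂ)) * Complex.exp (θ * Complex.I)))).re = 1 := by
        intro θ
        rw [if_pos (by simp)]
        simp
      rw [intervalIntegral.integral_congr (fun θ _ => this θ)]
      simp
    rw [hsimp]
    constructor
    · linarith
    · linarith [Real.pi_pos]
  · have hrpos : 0 < r := lt_of_le_of_ne hr0 (Ne.symm hr)
    set H : ℝ → ℝ := fun θ => (gg f (circleMap 0 r θ)).re with hH
    have hcm : ∀ θ : ℝ, ((r : ℂ) * Complex.exp (θ * Complex.I)) = circleMap 0 r θ := by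
      intro θ; simp [circleMap]
    have hmem : ∀ θ : ℝ, circleMap 0 r θ ∈ ball (0:ℂ) 1 := by
      intro θ
      simp only [mem_ball, Complex.dist_eq, sub_zero, norm_circleMap_zero]
      rw [_root_.abs_of_pos hrpos]; exact hr1
    have hne : ∀ θ : ℝ, circleMap 0 r θ ≠ 0 := fun θ => circleMap_ne_center (ne_of_gt hrpos)
    have hinteq : ∀ θ : ℝ, (if ((r : ℂ) * Complex.exp (θ * Complex.I)) = 0 then (1:ℂ) else
        (((r : ℂ) * Complex.exp (θ * Complex.I))
          * deriv f ((r : ℂ) * Complex.exp (θ * Complex.I))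
          / f ((r : ℂ) * Complex.exp (θ * Complex.I)))).re = H θ := by
      intro θ
      rw [hcm θ, if_neg (hne θ), hH]
      rw [← gg_eq hd h0 h1' hd' hK _ (hmem θ) (hne θ)]
    rw [intervalIntegral.integral_congr (fun θ _ => hinteq θ)]
    have hcont : Continuous H :=
      Complex.continuous_re.comp (gg_circle_cont hd h0 h1' hd' hK hrpos hr1)
    have hgt : ∀ θ : ℝ, 1/2 < H θ := fun θ => gg_re_gt hd h0 h1' hd' hK _ (hmem θ)
    constructor
    · have hpos := intervalIntegral.intervalIntegral_pos_of_pos_on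
        (f := fun θ => H θ - 1/2)
        ((hcont.sub continuous_const).intervalIntegrable _ _)
        (fun x _ => by linarith [hgt x]) h12
      have hsplit : (∫ θ in θ₁..θ₂, (H θ - 1/2))
          = (∫ θ in θ₁..θ₂, H θ) - (θ₂ - θ₁) * (1/2) := by
        rw [intervalIntegral.integral_sub (hcont.intervalIntegrable _ _)
          ((continuous_const : Continuous fun _ : ℝ => (1:ℝ)/2).intervalIntegrable _ _)]
        simp [intervalIntegral.integral_const, smul_eq_mul]
      rw [hsplit] at hpos
      linarith
    · have h2pi := gg_integral hd h0 h1' hd' hK hrpos hr1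
      have hper : Function.Periodic H (2*π) := by
        intro θ
        simp only [hH]
        rw [periodic_circleMap 0 r θ]
      have hadd : (∫ θ in θ₁..(θ₁+2*π), H θ) = 2*π := by
        rw [hper.intervalIntegral_add_eq θ₁ 0]
        simpa using h2pi
      have hsplit2 : (∫ θ in θ₁..θ₂, H θ) + (∫ θ in θ₂..(θ₁+2*π), H θ)
          = ∫ θ in θ₁..(θ₁+2*π), H θ :=
        intervalIntegral.integral_add_adjacent_intervals
          (hcont.intervalIntegrable _ _) (hcont.intervalIntegrable _ _)
      have hθle : θ₂ ≤ θ₁ + 2*π := by linarith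
      have hmono : (θ₁ + 2*π - θ₂) * (1/2) ≤ ∫ θ in θ₂..(θ₁+2*π), H θ := by
        have := intervalIntegral.integral_mono_on (μ := MeasureTheory.volume) (f := fun _ => (1:ℝ)/2) (g := H)
          hθle ((continuous_const : Continuous fun _ : ℝ => (1:ℝ)/2).intervalIntegrable _ _)
          (hcont.intervalIntegrable _ _)
          (fun x _ => (hgt x).le)
        rw [intervalIntegral.integral_const] at this
        simpa [smul_eq_mul] using this
      linarith
end

section
/- If f is a convex function on the unit disk, then for every 0 ≤ r < 1 and 0 ≤ θ₁ < θ₂ ≤ 2π, 0 < ∫_{θ₁}^{θ₂} Re(1 + z f''(z)/f'(z)) dθ ≤ 2π where z = r e^{iθ}. -/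
open Complex Metric Real

/-- for convex `f`, `0 ≤ r < 1` and `0 ≤ θ₁ < θ₂ ≤ 2π`,
`0 < ∫_{θ₁}^{θ₂} Re (1 + z f''(z)/f'(z)) dθ ≤ 2π` with `z = r e^{iθ}`. -/
theorem stmt_11 (f : ℂ → ℂ) (hf : Kclass f)
    (r : ℝ) (hr0 : 0 ≤ r) (hr1 : r < 1)
    (θ₁ θ₂ : ℝ) (h1 : 0 ≤ θ₁) (h12 : θ₁ < θ₂) (h2 : θ₂ ≤ 2 * π) :
    0 <
        (∫ θ in θ₁..θ₂,
          (1 + ((r : ℂ) * Complex.exp (θ * Complex.I))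
              * deriv (deriv f) ((r : ℂ) * Complex.exp (θ * Complex.I))
              / deriv f ((r : ℂ) * Complex.exp (θ * Complex.I))).re)
      ∧
      (∫ θ in θ₁..θ₂,
          (1 + ((r : ℂ) * Complex.exp (θ * Complex.I))
              * deriv (deriv f) ((r : ℂ) * Complex.exp (θ * Complex.I))
              / deriv f ((r : ℂ) * Complex.exp (θ * Complex.I))).re)
        ≤ 2 * π := by
  -- Notation
  set F : ℂ → ℂ := fun z => 1 + z * deriv (deriv f) z / deriv f z with hFdef
  set g : ℝ → ℝ := fun θ => (F ((r : ℂ) * Complex.exp (θ * Complex.I))).re with hgdef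
  have hne := hf.1.2.2.2
  -- the circle of radius r lies in the unit ball
  have hmem : ∀ θ : ℝ, (r : ℂ) * Complex.exp (θ * Complex.I) ∈ ball (0:ℂ) 1 := by
    intro θ
    simp only [mem_ball, dist_zero_right, norm_mul, Complex.norm_real, Real.norm_eq_abs]
    rw [_root_.abs_of_nonneg hr0]
    calc r * ‖Complex.exp (θ * Complex.I)‖ = r * 1 := by
          simp [Complex.norm_exp_ofReal_mul_I]
      _ < 1 := by simpa using hr1
  -- F is differentiable on the unit ball
  have hA : AnalyticOnNhd ℂ f (ball 0 1) := hf.1.1.analyticOnNhd isOpen_ball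
  have hA' : AnalyticOnNhd ℂ (deriv f) (ball 0 1) := hA.deriv
  have hA'' : AnalyticOnNhd ℂ (deriv (deriv f)) (ball 0 1) := hA'.deriv
  have hF : DifferentiableOn ℂ F (ball 0 1) := by
    apply (differentiableOn_const (1:ℂ)).add
    exact (differentiableOn_id.mul hA''.differentiableOn).div hA'.differentiableOn hne
  -- g is continuous and positive
  have hcirc : Continuous fun θ : ℝ => (r : ℂ) * Complex.exp (θ * Complex.I) := by
    continuity
  have hgcont : Continuous g := by
    have : ContinuousOn F (ball 0 1) := hF.continuousOn
    exact Complex.continuous_re.comp ((this.comp_continuous hcirc hmem))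
  have hgpos : ∀ θ : ℝ, 0 < g θ := fun θ => hf.2 _ (hmem θ)
  have hgint : ∀ a b : ℝ, IntervalIntegrable g MeasureTheory.volume a b := fun a b =>
    hgcont.intervalIntegrable a b
  constructor
  · exact intervalIntegral.intervalIntegral_pos_of_pos (hgint θ₁ θ₂) hgpos h12
  -- total integral over [0, 2π] equals 2π
  have htot : (∫ θ in (0:ℝ)..(2*π), g θ) = 2 * π := by
    rcases eq_or_lt_of_le hr0 with hr | hr
    · have : g = fun _ => 1 := by
        funext θ; simp [hgdef, hFdef, ← hr]
      rw [this]; simp [mul_comm]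
    · -- mean value property via the Cauchy integral formula
      have hdc : DiffContOnCl ℂ F (ball 0 r) := by
        refine ⟨hF.mono (ball_subset_ball hr1.le), ?_⟩
        refine (hF.continuousOn).mono ?_
        rw [closure_ball (0:ℂ) hr.ne']
        exact closedBall_subset_ball hr1
      have hcau := hdc.circleIntegral_sub_inv_smul (mem_ball_self hr)
      have hne0 : ∀ θ : ℝ, circleMap 0 r θ ≠ 0 := fun θ => circleMap_ne_center hr.ne'
      have hFint : IntervalIntegrable (fun θ : ℝ => F ((r:ℂ) * Complex.exp (θ * Complex.I)))
          MeasureTheory.volume 0 (2*π) := by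
        exact ((hF.continuousOn.comp_continuous hcirc hmem)).intervalIntegrable 0 (2*π)
      have hcirc_eq : ∀ θ : ℝ, circleMap 0 r θ = (r:ℂ) * Complex.exp (θ * Complex.I) := by
        intro θ; simp [circleMap]
      have hmain : (∫ θ in (0:ℝ)..(2*π), F ((r:ℂ) * Complex.exp (θ * Complex.I)))
          = 2 * π := by
        have hF0 : F 0 = 1 := by simp [hFdef]
        rw [circleIntegral, hF0] at hcau
        simp only [deriv_circleMap, sub_zero, smul_eq_mul, smul_eq_mul, mul_one] at hcau
        have : ∀ θ : ℝ, circleMap 0 r θ * Complex.I * ((circleMap 0 r θ)⁻¹ * F (circleMap 0 r θ))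
            = Complex.I * F ((r:ℂ) * Complex.exp (θ * Complex.I)) := by
          intro θ
          rw [hcirc_eq θ] at *
          field_simp [hcirc_eq θ ▸ hne0 θ]
          exact mul_div_cancel_left₀ _ (Complex.ofReal_ne_zero.mpr hr.ne')
        rw [intervalIntegral.integral_congr (fun θ _ => this θ),
          intervalIntegral.integral_const_mul] at hcau
        exact mul_left_cancel₀ Complex.I_ne_zero (hcau.trans (by ring))
      -- take real parts
      have hre := Complex.reCLM.intervalIntegral_comp_comm hFint
      have : (∫ θ in (0:ℝ)..(2*π), g θ)
          = (∫ θ in (0:ℝ)..(2*π), F ((r:ℂ) * Complex.exp (θ * Complex.I))).re := by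
        simpa [hgdef] using hre
      rw [this, hmain]
      simp
  -- monotonicity: the integrand is positive
  have e1 : (∫ θ in (0:ℝ)..θ₁, g θ) + (∫ θ in θ₁..θ₂, g θ) + (∫ θ in θ₂..(2*π), g θ)
      = 2 * π := by
    rw [intervalIntegral.integral_add_adjacent_intervals (hgint 0 θ₁) (hgint θ₁ θ₂),
      intervalIntegral.integral_add_adjacent_intervals (hgint 0 θ₂) (hgint θ₂ (2*π)), htot]
  have n1 : 0 ≤ ∫ θ in (0:ℝ)..θ₁, g θ :=
    intervalIntegral.integral_nonneg h1 (fun θ _ => (hgpos θ).le)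
  have n2 : 0 ≤ ∫ θ in θ₂..(2*π), g θ :=
    intervalIntegral.integral_nonneg h2 (fun θ _ => (hgpos θ).le)
  linarith
end

section
/- If f ∈ 𝒢 (i.e., Re(1 + z f''(z)/f'(z)) < 3/2 on 𝔻 with f normalized), then 0 < Re(z f'(z)/f(z)) < 4/3 for all z in the unit disk. -/
open Complex Metric

open Set Filter Topology

lemma jack_lemma {ω : ℂ → ℂ} {U : Set ℂ} (hU : IsOpen U) (hω : DifferentiableOn ℂ ω U)
    {ρ : ℝ} (hρ : 0 < ρ) (hsub : closedBall (0:ℂ) ρ ⊆ U) (h0 : ω 0 = 0)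
    {z₀ : ℂ} (hz₀ : ‖z₀‖ = ρ) (hbound : ∀ z ∈ closedBall (0:ℂ) ρ, ‖ω z‖ ≤ 1)
    (hmax : ‖ω z₀‖ = 1) :
    ∃ k : ℝ, 1 ≤ k ∧ z₀ * deriv ω z₀ = (k:ℂ) * ω z₀ := by
  have hz₀cb : z₀ ∈ closedBall (0:ℂ) ρ := by
    simp [mem_closedBall_zero_iff, hz₀]
  have hz₀U : U ∈ 𝓝 z₀ := hU.mem_nhds (hsub hz₀cb)
  set w := ω z₀ with hw
  set d := deriv ω z₀ with hd
  have hdat : HasDerivAt ω d z₀ := (hω.differentiableAt hz₀U).hasDerivAt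
  have hnormSqw : normSq w = 1 := by
    rw [Complex.normSq_eq_norm_sq, hmax]; norm_num
  -- the real-linear Fréchet derivative of ω at z₀
  have hFat : HasFDerivAt ω (((1 : ℂ →L[ℂ] ℂ).smulRight d).restrictScalars ℝ) z₀ :=
    hdat.hasFDerivAt.restrictScalars ℝ
  -- ANGULAR PART ----------------------------------------------------------
  have hcirc : ∀ θ : ℝ, ‖z₀ * Complex.exp (θ * Complex.I)‖ = ρ := by
    intro θ
    rw [norm_mul, Complex.norm_exp_ofReal_mul_I, hz₀]
    ring
  have hc0 : z₀ * Complex.exp ((0:ℝ) * Complex.I) = z₀ := by simp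
  have hcat : HasDerivAt (fun θ : ℝ => z₀ * Complex.exp (θ * Complex.I)) (z₀ * Complex.I) 0 := by
    have h1 : HasDerivAt (fun θ : ℝ => (θ : ℂ) * Complex.I) Complex.I 0 := by
      simpa using (Complex.ofRealCLM.hasDerivAt (x := (0:ℝ))).mul_const Complex.I
    have h2 : HasDerivAt (fun θ : ℝ => Complex.exp ((θ:ℂ) * Complex.I))
        (Complex.exp ((0:ℝ) * Complex.I) * Complex.I) 0 := h1.cexp
    simpa using h2.const_mul z₀
  have hAat : HasDerivAt (fun θ : ℝ => ω (z₀ * Complex.exp (θ * Complex.I)))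
      (z₀ * Complex.I * d) 0 := by
    have hF' : HasFDerivAt ω (((1 : ℂ →L[ℂ] ℂ).smulRight d).restrictScalars ℝ)
        (z₀ * Complex.exp ((0:ℝ) * Complex.I)) := by rwa [hc0]
    have := hF'.comp_hasDerivAt 0 hcat
    simpa [Function.comp_def, smul_eq_mul, mul_comm, mul_assoc, mul_left_comm] using this
  have hNat : HasDerivAt (fun θ : ℝ => normSq (ω (z₀ * Complex.exp (θ * Complex.I))))
      (2 * (w.re * (z₀ * Complex.I * d).re + w.im * (z₀ * Complex.I * d).im)) 0 := by
    have hre : HasDerivAt (fun θ : ℝ => (ω (z₀ * Complex.exp (θ * Complex.I))).re)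
        ((z₀ * Complex.I * d).re) 0 := by
      have := Complex.reCLM.hasFDerivAt.comp_hasDerivAt 0 hAat
      simpa [Function.comp_def] using this
    have him : HasDerivAt (fun θ : ℝ => (ω (z₀ * Complex.exp (θ * Complex.I))).im)
        ((z₀ * Complex.I * d).im) 0 := by
      have := Complex.imCLM.hasFDerivAt.comp_hasDerivAt 0 hAat
      simpa [Function.comp_def] using this
    have := (hre.mul hre).add (him.mul him)
    have e0 : ω (z₀ * Complex.exp ((0:ℝ) * Complex.I)) = w := by rw [hc0]
    simp only [normSq_apply]
    refine this.congr_deriv ?_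
    rw [e0]; ring
  have hNmax : IsLocalMax (fun θ : ℝ => normSq (ω (z₀ * Complex.exp (θ * Complex.I)))) 0 := by
    apply Filter.Eventually.of_forall
    intro θ
    have h1 : ‖ω (z₀ * Complex.exp (θ * Complex.I))‖ ≤ 1 :=
      hbound _ (by simp [mem_closedBall_zero_iff, hcirc θ, hz₀])
    have h2 : normSq (ω (z₀ * Complex.exp (θ * Complex.I))) ≤ 1 := by
      have := Complex.sq_norm (ω (z₀ * Complex.exp (θ * Complex.I)))
      rw [← this]
      nlinarith [norm_nonneg (ω (z₀ * Complex.exp (θ * Complex.I)))]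
    simpa [hc0, ← hw, hnormSqw] using h2
  have hang : w.re * (z₀ * Complex.I * d).re + w.im * (z₀ * Complex.I * d).im = 0 := by
    have := hNmax.hasDerivAt_eq_zero hNat
    linarith
  -- RADIAL PART ------------------------------------------------------------
  have hc2at : ∀ t : ℝ, HasDerivAt (fun t : ℝ => (t : ℂ) * z₀) z₀ t := by
    intro t
    simpa using (Complex.ofRealCLM.hasDerivAt (x := t)).mul_const z₀
  have hA2at : HasDerivAt (fun t : ℝ => ω ((t:ℂ) * z₀)) (z₀ * d) 1 := by
    have hF' : HasFDerivAt ω (((1 : ℂ →L[ℂ] ℂ).smulRight d).restrictScalars ℝ)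
        (((1:ℝ):ℂ) * z₀) := by simpa using hFat
    have := hF'.comp_hasDerivAt 1 (hc2at 1)
    simpa [Function.comp_def, smul_eq_mul] using this
  have hGat : HasDerivAt (fun t : ℝ => normSq (ω ((t:ℂ) * z₀)))
      (2 * (w.re * (z₀ * d).re + w.im * (z₀ * d).im)) 1 := by
    have hre : HasDerivAt (fun t : ℝ => (ω ((t:ℂ) * z₀)).re) ((z₀ * d).re) 1 := by
      have := Complex.reCLM.hasFDerivAt.comp_hasDerivAt 1 hA2at
      simpa [Function.comp_def] using this
    have him : HasDerivAt (fun t : ℝ => (ω ((t:ℂ) * z₀)).im) ((z₀ * d).im) 1 := by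
      have := Complex.imCLM.hasFDerivAt.comp_hasDerivAt 1 hA2at
      simpa [Function.comp_def] using this
    have := (hre.mul hre).add (him.mul him)
    have e1 : ω (((1:ℝ):ℂ) * z₀) = w := by norm_num [hw]
    simp only [normSq_apply]
    refine this.congr_deriv ?_
    rw [e1]; ring
  -- Schwarz bound : for t ∈ (0,1), ‖ω (t z₀)‖ ≤ t
  have hSch : ∀ t : ℝ, t ∈ Ioo (0:ℝ) 1 → ‖ω ((t:ℂ) * z₀)‖ ≤ t := by
    intro t ht
    have hxmem : (t:ℂ) * z₀ ∈ ball (0:ℂ) ρ := by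
      rw [mem_ball_zero_iff, norm_mul, Complex.norm_real, Real.norm_eq_abs,
        abs_of_pos ht.1, hz₀]
      nlinarith [ht.2, hρ]
    refine _root_.le_of_forall_pos_le_add fun ε hε => ?_
    have hmaps : MapsTo ω (ball (0:ℂ) ρ) (closedBall (ω 0) (1 + ε)) := by
      intro z hz
      rw [h0, mem_closedBall_zero_iff]
      exact (lt_of_le_of_lt (hbound z (ball_subset_closedBall hz)) (by linarith)).le
    have hdiff : DifferentiableOn ℂ ω (ball (0:ℂ) ρ) :=
      hω.mono (ball_subset_closedBall.trans hsub)
    have := dist_le_div_mul_dist_of_mapsTo_ball hdiff hmaps hxmem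
    rw [h0, dist_zero_right, dist_zero_right, norm_mul, Complex.norm_real,
      Real.norm_eq_abs, abs_of_pos ht.1, hz₀] at this
    calc ‖ω ((t:ℂ) * z₀)‖ ≤ (1 + ε) / ρ * (t * ρ) := this
      _ = t + ε * t := by field_simp
      _ ≤ t + ε := by nlinarith [ht.2, hε]
  -- slope bound gives derivative ≥ 2
  have hG1 : (2:ℝ) ≤ 2 * (w.re * (z₀ * d).re + w.im * (z₀ * d).im) := by
    have hW : HasDerivWithinAt (fun t : ℝ => normSq (ω ((t:ℂ) * z₀)))
        (2 * (w.re * (z₀ * d).re + w.im * (z₀ * d).im)) (Iio 1) 1 := hGat.hasDerivWithinAt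
    rw [hasDerivWithinAt_iff_tendsto_slope] at hW
    have hmem : Iio (1:ℝ) \ {1} = Iio 1 :=
      Set.diff_singleton_eq_self (by simp)
    rw [hmem] at hW
    have hev : ∀ᶠ t in 𝓝[<] (1:ℝ), 1 + t ≤
        slope (fun t : ℝ => normSq (ω ((t:ℂ) * z₀))) 1 t := by
      have hIoo : Ioo (0:ℝ) 1 ∈ 𝓝[<] (1:ℝ) := by
        apply Ioo_mem_nhdsLT_of_mem
        constructor <;> norm_num
      filter_upwards [hIoo] with t ht
      have hGt : normSq (ω ((t:ℂ) * z₀)) ≤ t ^ 2 := by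
        have h1 := hSch t ht
        have := Complex.sq_norm (ω ((t:ℂ) * z₀))
        rw [← this]
        nlinarith [norm_nonneg (ω ((t:ℂ) * z₀))]
      have hG1v : normSq (ω (((1:ℝ):ℂ) * z₀)) = 1 := by
        norm_num [← hw, hnormSqw]
      rw [slope_def_field, hG1v]
      rw [div_eq_mul_inv]
      have hinv : (t - 1)⁻¹ < 0 := inv_lt_zero.mpr (by linarith [ht.2])
      have hnum : normSq (ω ((t:ℂ) * z₀)) - 1 ≤ t ^ 2 - 1 := by linarith
      have : (t ^ 2 - 1) * (t - 1)⁻¹ ≤ (normSq (ω ((t:ℂ) * z₀)) - 1) * (t - 1)⁻¹ := by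
        apply mul_le_mul_of_nonpos_right hnum (le_of_lt hinv)
      have heq : (t ^ 2 - 1) * (t - 1)⁻¹ = 1 + t := by
        have ht1 : t - 1 ≠ 0 := by intro h; nlinarith [ht.2]
        field_simp
        ring
      linarith [heq ▸ this]
    have hlim : Tendsto (fun t : ℝ => 1 + t) (𝓝[<] (1:ℝ)) (𝓝 2) := by
      have : Tendsto (fun t : ℝ => 1 + t) (𝓝 (1:ℝ)) (𝓝 2) := by
        have h := ((continuous_const (y := (1:ℝ))).add continuous_id).tendsto (1:ℝ)
        norm_num at h
        convert h using 2; rfl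
      exact this.mono_left nhdsWithin_le_nhds
    exact le_of_tendsto_of_tendsto hlim hW hev
  -- COMBINE ------------------------------------------------------------------
  set k := ((starRingEnd ℂ) w * (z₀ * d)).re with hk
  have hDre : 1 ≤ k := by
    have : k = w.re * (z₀ * d).re + w.im * (z₀ * d).im := by
      simp [hk, Complex.mul_re, Complex.conj_re, Complex.conj_im]
      try ring
    rw [this]; linarith
  have hDim : ((starRingEnd ℂ) w * (z₀ * d)).im = 0 := by
    have h1 : ((starRingEnd ℂ) w * (z₀ * d)).im
        = w.re * (z₀ * d).im - w.im * (z₀ * d).re := by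
      simp [Complex.mul_im, Complex.conj_re, Complex.conj_im]
      try ring
    have h2 : (z₀ * Complex.I * d).re = -(z₀ * d).im := by
      have : z₀ * Complex.I * d = (z₀ * d) * Complex.I := by ring
      rw [this]
      simp [Complex.mul_re]
    have h3 : (z₀ * Complex.I * d).im = (z₀ * d).re := by
      have : z₀ * Complex.I * d = (z₀ * d) * Complex.I := by ring
      rw [this]
      simp [Complex.mul_im]
    rw [h2, h3] at hang
    rw [h1]
    linarith
  refine ⟨k, hDre, ?_⟩
  have hDeq : (starRingEnd ℂ) w * (z₀ * d) = (k : ℂ) := by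
    apply Complex.ext
    · simp [hk]
    · simpa using hDim
  have hmul : w * (starRingEnd ℂ) w = 1 := by
    rw [Complex.mul_conj, hnormSqw]; norm_num
  calc z₀ * d = w * (starRingEnd ℂ) w * (z₀ * d) := by rw [hmul, one_mul]
    _ = w * ((starRingEnd ℂ) w * (z₀ * d)) := by ring
    _ = w * (k : ℂ) := by rw [hDeq]
    _ = (k : ℂ) * w := by ring

lemma fclass_re_gt (f : ℂ → ℂ) (hf : Fclass f)
    (hG : ∀ z ∈ ball (0:ℂ) 1,
      (1 + z * deriv (deriv f) z / deriv f z).re < 3 / 2) :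
    ∀ z ∈ ball (0:ℂ) 1, 3/4 < ((dslope f 0 z) / deriv f z).re := by
  obtain ⟨hdiff, hf0, hd0, hne⟩ := hf
  set B : Set ℂ := ball (0:ℂ) 1 with hB
  have hBopen : IsOpen B := isOpen_ball
  have h0B : (0:ℂ) ∈ B := mem_ball_self one_pos
  set h : ℂ → ℂ := fun z => dslope f 0 z / deriv f z with hh_def
  have hdsl : DifferentiableOn ℂ (dslope f 0) B :=
    (Complex.differentiableOn_dslope (hBopen.mem_nhds h0B)).mpr hdiff
  have hfan : AnalyticOnNhd ℂ f B := hdiff.analyticOnNhd hBopen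
  have hderiv_diff : DifferentiableOn ℂ (deriv f) B := hfan.deriv.differentiableOn
  have hh : DifferentiableOn ℂ h B := hdsl.div hderiv_diff hne
  have h0 : h 0 = 1 := by simp [hh_def, dslope_same, hd0]
  by_contra hcon
  push_neg at hcon
  obtain ⟨z₁, hz₁B, hz₁⟩ := hcon
  have hz₁n : ‖z₁‖ < 1 := mem_ball_zero_iff.mp hz₁B
  set S : Set ℂ := {z | z ∈ closedBall (0:ℂ) ‖z₁‖ ∧ (h z).re ≤ 3/4} with hS_def
  have hcbB : closedBall (0:ℂ) ‖z₁‖ ⊆ B := closedBall_subset_ball hz₁n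
  have hScl : IsClosed S := by
    have hSeq : S = closedBall (0:ℂ) ‖z₁‖ ∩ (fun z => (h z).re) ⁻¹' (Iic (3/4)) := by
      ext z; simp [hS_def]
    rw [hSeq]
    exact ContinuousOn.preimage_isClosed_of_isClosed
      (Complex.continuous_re.comp_continuousOn ((hh.continuousOn).mono hcbB))
      Metric.isClosed_closedBall isClosed_Iic
  have hScomp : IsCompact S :=
    (isCompact_closedBall _ _).of_isClosed_subset hScl (fun z hz => hz.1)
  have hSne : S.Nonempty := ⟨z₁, mem_closedBall_zero_iff.mpr le_rfl, hz₁⟩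
  obtain ⟨z₀, hz₀S, hz₀min⟩ := hScomp.exists_isMinOn hSne continuous_norm.continuousOn
  set ρ := ‖z₀‖ with hρ_def
  have hρ1 : ρ < 1 := lt_of_le_of_lt (mem_closedBall_zero_iff.mp hz₀S.1) hz₁n
  have hρpos : 0 < ρ := by
    rw [hρ_def, norm_pos_iff]
    intro h'
    have h2 := hz₀S.2
    rw [h', h0] at h2
    norm_num at h2
  have ha : ∀ z : ℂ, ‖z‖ < ρ → 3/4 < (h z).re := by
    intro z hz
    by_contra hz'
    push_neg at hz'
    have hzS : z ∈ S :=
      ⟨mem_closedBall_zero_iff.mpr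
        (le_of_lt (lt_of_lt_of_le hz (mem_closedBall_zero_iff.mp hz₀S.1))), hz'⟩
    exact absurd (isMinOn_iff.mp hz₀min z hzS) (not_le.mpr hz)
  have hb : ∀ z ∈ closedBall (0:ℂ) ρ, 3/4 ≤ (h z).re := by
    intro z hz
    have hzρ : ‖z‖ ≤ ρ := mem_closedBall_zero_iff.mp hz
    have hzB : z ∈ B := mem_ball_zero_iff.mpr (lt_of_le_of_lt hzρ hρ1)
    have hcontz : ContinuousAt h z := hh.continuousOn.continuousAt (hBopen.mem_nhds hzB)
    have c1 : ContinuousAt (fun t : ℝ => (t:ℂ) * z) 1 :=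
      (Complex.continuous_ofReal.mul continuous_const).continuousAt
    have c2 : ContinuousAt (fun t : ℝ => h ((t:ℂ) * z)) 1 := by
      have := ContinuousAt.comp (g := h) (x := (1:ℝ)) (by simpa using hcontz) c1
      simpa [Function.comp_def] using this
    have c3 : ContinuousAt (fun t : ℝ => (h ((t:ℂ) * z)).re) 1 :=
      Complex.continuous_re.continuousAt.comp c2
    have htend : Tendsto (fun t : ℝ => (h ((t:ℂ) * z)).re) (𝓝[<] (1:ℝ)) (𝓝 ((h z).re)) := by
      have h1 : ((1:ℝ):ℂ) * z = z := by norm_num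
      have ht2 := c3.tendsto
      rw [h1] at ht2
      exact ht2.mono_left nhdsWithin_le_nhds
    apply ge_of_tendsto htend
    have hIoo : Ioo (0:ℝ) 1 ∈ 𝓝[<] (1:ℝ) := by
      apply Ioo_mem_nhdsLT_of_mem
      constructor <;> norm_num
    filter_upwards [hIoo] with t ht
    apply le_of_lt
    apply ha
    rw [norm_mul, Complex.norm_real, Real.norm_eq_abs, abs_of_pos ht.1]
    nlinarith [ht.1, ht.2, norm_nonneg z, hzρ, hρpos]
  have hc : (h z₀).re = 3/4 :=
    le_antisymm hz₀S.2 (hb z₀ (mem_closedBall_zero_iff.mpr le_rfl))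
  -- the Möbius transform
  have hhalf : ∀ z ∈ closedBall (0:ℂ) ρ, h z ≠ 1/2 := by
    intro z hz heq
    have h2 := hb z hz
    rw [heq] at h2
    norm_num at h2
  have hden : ∀ z : ℂ, h z ≠ 1/2 → 2 * h z - 1 ≠ 0 := by
    intro z hz heq
    apply hz
    field_simp
    linear_combination heq
  set U : Set ℂ := B ∩ h ⁻¹' ({(1/2 : ℂ)}ᶜ) with hU_def
  have hUopen : IsOpen U :=
    hh.continuousOn.isOpen_inter_preimage hBopen isOpen_compl_singleton
  have hne12 : ∀ z ∈ U, h z ≠ 1/2 := fun z hz => hz.2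
  have hcbU : closedBall (0:ℂ) ρ ⊆ U := fun z hz =>
    ⟨(closedBall_subset_ball hρ1) hz, hhalf z hz⟩
  set ω : ℂ → ℂ := fun z => (2 - 2 * h z) / (2 * h z - 1) with hω_def
  have hωdiff : DifferentiableOn ℂ ω U := by
    apply DifferentiableOn.div
    · exact (differentiableOn_const _).sub ((hh.mono inter_subset_left).const_mul 2)
    · exact ((hh.mono inter_subset_left).const_mul 2).sub (differentiableOn_const _)
    · intro z hz; exact hden z (hne12 z hz)
  have hω0 : ω 0 = 0 := by
    rw [hω_def]
    simp only [h0]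
    norm_num
  have hnormω : ∀ z ∈ closedBall (0:ℂ) ρ, ‖ω z‖ ≤ 1 := by
    intro z hz
    have hx := hb z hz
    have hdz := hden z (hhalf z hz)
    rw [hω_def]
    simp only
    rw [norm_div, div_le_one (norm_pos_iff.mpr hdz)]
    rw [Complex.norm_def, Complex.norm_def]
    apply Real.sqrt_le_sqrt
    rw [normSq_apply, normSq_apply]
    simp only [Complex.sub_re, Complex.sub_im, Complex.mul_re, Complex.mul_im,
      Complex.re_ofNat, Complex.im_ofNat, Complex.one_re, Complex.one_im]
    nlinarith [hx]
  have hmaxω : ‖ω z₀‖ = 1 := by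
    have hdz := hden z₀ (hhalf z₀ (mem_closedBall_zero_iff.mpr le_rfl))
    rw [hω_def]
    simp only
    rw [norm_div, div_eq_one_iff_eq (norm_ne_zero_iff.mpr hdz)]
    rw [Complex.norm_def, Complex.norm_def]
    congr 1
    rw [normSq_apply, normSq_apply]
    simp only [Complex.sub_re, Complex.sub_im, Complex.mul_re, Complex.mul_im,
      Complex.re_ofNat, Complex.im_ofNat, Complex.one_re, Complex.one_im]
    nlinarith [hc]
  obtain ⟨k, hk1, hkeq⟩ := jack_lemma hUopen hωdiff hρpos hcbU hω0 hρ_def.symm hnormω hmaxω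
  -- derivative computations
  have hz₀B : z₀ ∈ B := mem_ball_zero_iff.mpr hρ1
  have hz₀ne : z₀ ≠ 0 := norm_pos_iff.mp hρpos
  have hF'ne : deriv f z₀ ≠ 0 := hne z₀ hz₀B
  have hF'at : HasDerivAt f (deriv f z₀) z₀ :=
    (hdiff.differentiableAt (hBopen.mem_nhds hz₀B)).hasDerivAt
  have hF''at : HasDerivAt (deriv f) (deriv (deriv f) z₀) z₀ :=
    ((hfan.deriv z₀ hz₀B).differentiableAt).hasDerivAt
  set F := f z₀ with hF_def
  set F' := deriv f z₀ with hF'_def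
  set F'' := deriv (deriv f) z₀ with hF''_def
  have hdenat : HasDerivAt (fun z => z * deriv f z) (F' + z₀ * F'') z₀ := by
    have := (hasDerivAt_id z₀).mul hF''at
    simpa [Pi.mul_def] using this
  set Dφ := (F' * (z₀ * F') - F * (F' + z₀ * F'')) / (z₀ * F') ^ 2 with hDφ
  have hφat : HasDerivAt (fun z => f z / (z * deriv f z)) Dφ z₀ :=
    hF'at.div hdenat (mul_ne_zero hz₀ne hF'ne)
  have hev : h =ᶠ[𝓝 z₀] fun z => f z / (z * deriv f z) := by
    have hmem : (B ∩ {(0:ℂ)}ᶜ) ∈ 𝓝 z₀ :=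
      (hBopen.inter isOpen_compl_singleton).mem_nhds ⟨hz₀B, hz₀ne⟩
    filter_upwards [hmem] with z hz
    rw [hh_def]
    simp only
    rw [dslope_of_ne f hz.2, slope_def_field, hf0, sub_zero, sub_zero, div_div]
  have hhat : HasDerivAt h Dφ z₀ := hφat.congr_of_eventuallyEq hev
  have hh₀eq : h z₀ = F / (z₀ * F') := hev.eq_of_nhds
  set h₀ := h z₀ with hh₀
  have hh₀re : h₀.re = 3/4 := hc
  have hh₀den : 2 * h₀ - 1 ≠ 0 := hden z₀ (hhalf z₀ (mem_closedBall_zero_iff.mpr le_rfl))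
  have hωat : HasDerivAt ω
      (((-2) * Dφ * (2 * h₀ - 1) - (2 - 2 * h₀) * (2 * Dφ)) / (2 * h₀ - 1) ^ 2) z₀ := by
    have hnum : HasDerivAt (fun z => 2 - 2 * h z) ((-2) * Dφ) z₀ := by
      have := (hhat.const_mul (2:ℂ)).const_sub 2
      refine this.congr_deriv ?_
      ring
    have hden' : HasDerivAt (fun z => 2 * h z - 1) (2 * Dφ) z₀ :=
      (hhat.const_mul (2:ℂ)).sub_const 1
    exact hnum.div hden' hh₀den
  have hωderiv : deriv ω z₀ =
      ((-2) * Dφ * (2 * h₀ - 1) - (2 - 2 * h₀) * (2 * Dφ)) / (2 * h₀ - 1) ^ 2 := hωat.deriv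
  rw [hωderiv] at hkeq
  have hωz₀ : ω z₀ = (2 - 2 * h₀) / (2 * h₀ - 1) := rfl
  rw [hωz₀] at hkeq
  clear_value h₀ Dφ F F' F''
  have hkey : z₀ * Dφ = -(k:ℂ) * (1 - h₀) * (2 * h₀ - 1) := by
    have h2 : (-2 : ℂ) * (2 * h₀ - 1) ≠ 0 := by
      apply mul_ne_zero _ hh₀den; norm_num
    apply mul_left_cancel₀ h2
    field_simp at hkeq
    linear_combination (2 * (2 * h₀ - 1)) * hkeq
  have hF0 : F ≠ 0 := by
    intro hF
    have hzero : h₀ = 0 := by rw [hh₀eq, hF, zero_div]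
    rw [hzero] at hh₀re
    norm_num at hh₀re
  have hident : 1 + z₀ * F'' / F' = (1 + (k:ℂ) * (1 - h₀) * (2 * h₀ - 1)) / h₀ := by
    have h1 : (1:ℂ) + (k:ℂ) * (1 - h₀) * (2 * h₀ - 1) = 1 - z₀ * Dφ := by
      rw [hkey]; ring
    rw [h1, hh₀eq, hDφ]
    field_simp
    ring
  have hcontr := hG z₀ hz₀B
  rw [← hF''_def, ← hF'_def, hident] at hcontr
  have hfin : (3:ℝ)/2 ≤ ((1 + (k:ℂ) * (1 - h₀) * (2 * h₀ - 1)) / h₀).re := by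
    set y := h₀.im with hy
    have hnormSq : normSq h₀ = (3/4)^2 + y^2 := by
      rw [normSq_apply, hh₀re]; ring
    have hu_re : (1 + (k:ℂ) * (1 - h₀) * (2 * h₀ - 1)).re = 1 + k * (1/8 + 2*y^2) := by
      simp only [Complex.add_re, Complex.one_re, Complex.mul_re, Complex.mul_im,
        Complex.sub_re, Complex.sub_im, Complex.ofReal_re, Complex.ofReal_im,
        Complex.re_ofNat, Complex.im_ofNat, Complex.one_im, hh₀re, ← hy]
      ring
    have hu_im : (1 + (k:ℂ) * (1 - h₀) * (2 * h₀ - 1)).im = 0 := by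
      simp only [Complex.add_im, Complex.one_im, Complex.mul_re, Complex.mul_im,
        Complex.sub_re, Complex.sub_im, Complex.ofReal_re, Complex.ofReal_im,
        Complex.re_ofNat, Complex.im_ofNat, Complex.one_re, hh₀re, ← hy]
      ring
    rw [Complex.div_re, hu_re, hu_im, hnormSq, hh₀re]
    have hpos : (0:ℝ) < (3/4)^2 + y^2 := by positivity
    have heq2 : (1 + k * (1/8 + 2*y^2)) * (3/4) / ((3/4)^2 + y^2)
        + 0 * y / ((3/4)^2 + y^2)
        = ((1 + k * (1/8 + 2*y^2)) * (3/4)) / ((3/4)^2 + y^2) := by ring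
    rw [heq2, le_div_iff₀ hpos]
    nlinarith [hk1, sq_nonneg y, mul_nonneg (by linarith : (0:ℝ) ≤ k - 1)
      (by positivity : (0:ℝ) ≤ 1/8 + 2*y^2)]
  linarith

/-- if `f ∈ 𝒢`, i.e. `Re (1 + z f''/f') < 3/2` on the unit disk, then
`0 < Re (z f'(z)/f(z)) < 4/3` there (the value at `z = 0` being interpreted as `1`). -/
theorem stmt_15 (f : ℂ → ℂ) (hf : Fclass f)
    (hG : ∀ z ∈ ball (0:ℂ) 1,
      (1 + z * deriv (deriv f) z / deriv f z).re < 3 / 2) :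
    ∀ z ∈ ball (0:ℂ) 1,
      0 < (if z = 0 then 1 else (z * deriv f z / f z)).re ∧
      (if z = 0 then 1 else (z * deriv f z / f z)).re < 4 / 3 := by
  intro z hz
  by_cases hz0 : z = 0
  · subst hz0
    simp only [if_pos rfl, Complex.one_re]
    norm_num
  · have h34 := fclass_re_gt f hf hG z hz
    obtain ⟨hdiff, hf0, hd0, hne⟩ := hf
    have hq : dslope f 0 z / deriv f z = f z / (z * deriv f z) := by
      rw [dslope_of_ne f hz0, slope_def_field, hf0, sub_zero, sub_zero, div_div]
    rw [hq] at h34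
    set H := f z / (z * deriv f z) with hH
    have hHne : H ≠ 0 := by
      intro h'
      rw [h'] at h34
      norm_num at h34
    have hfz : f z ≠ 0 := by
      intro h'
      apply hHne
      rw [hH, h', zero_div]
    have hinv : z * deriv f z / f z = H⁻¹ := by
      rw [hH, inv_div]
    rw [if_neg hz0, hinv, Complex.inv_re]
    have hnormpos : 0 < normSq H := normSq_pos.mpr hHne
    constructor
    · apply div_pos (by linarith) hnormpos
    · rw [div_lt_iff₀ hnormpos, normSq_apply]
      nlinarith [h34, sq_nonneg H.im]
end

section
/- Let f(z) = [1-(1-z)²]/2 and g(z) = z/(1+z), and α, β real numbers with β ≥ 0 and α + β > 1. Then at the point z = 2/(α+β+1) ∈ (0,1), one has 1 + z C_{α,β}[f,g]''(z)/C_{α,β}[f,g]'(z) = (2-(1+α)z)/(2-z) - 2βz/(1+z) = -3β(α+β-1)/((α+β)(α+β+3)) < 0, whenever β > 0; hence C_{α,β}[f,g] is not convex. -/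
open Complex Metric MeasureTheory

private lemma slit_inv17 {w : ℂ} (h : w ∈ Complex.slitPlane) (h0 : w ≠ 0) :
    w⁻¹ ∈ Complex.slitPlane := by
  rw [Complex.mem_slitPlane_iff] at h ⊢
  have hn : 0 < Complex.normSq w := Complex.normSq_pos.2 h0
  rcases h with h | h
  · exact Or.inl (by rw [Complex.inv_re]; positivity)
  · refine Or.inr ?_
    rw [Complex.inv_im]
    simp only [ne_eq, neg_div, neg_eq_zero, div_eq_zero_iff, not_or]
    exact ⟨h, hn.ne'⟩

private lemma slit_sq17 {w : ℂ} (h : 0 < w.re) : w ^ 2 ∈ Complex.slitPlane := by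
  rw [Complex.mem_slitPlane_iff]
  by_cases him : w.im = 0
  · left
    simp only [pow_two, Complex.mul_re, him]
    nlinarith
  · right
    simp only [pow_two, Complex.mul_im, ne_eq]
    intro hc
    have h2 : w.re * w.im = 0 := by linarith
    rcases mul_eq_zero.1 h2 with h3 | h3
    · exact h.ne' h3
    · exact him h3

noncomputable def Fc17 (α β : ℝ) : ℂ → ℂ :=
  fun z => ((2 - z) / 2) ^ (α : ℂ) * (((1 + z) ^ 2)⁻¹) ^ (β : ℂ)

noncomputable def Fc17' (α β : ℝ) : ℂ → ℂ :=
  fun z => Fc17 α β z * (-(α : ℂ) / (2 - z) - 2 * (β : ℂ) / (1 + z))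

private lemma re_pos_1p {z : ℂ} (hz : ‖z‖ < 1) : 0 < (1 + z).re := by
  have := Complex.abs_re_le_norm z
  simp only [Complex.add_re, Complex.one_re]
  have h2 : |z.re| ≤ ‖z‖ := Complex.abs_re_le_norm z
  have := abs_le.1 h2
  linarith [this.1]

private lemma ne_1p {z : ℂ} (hz : ‖z‖ < 1) : (1 : ℂ) + z ≠ 0 := by
  intro h
  have := re_pos_1p hz
  rw [h] at this
  simp at this

private lemma re_pos_2m {z : ℂ} (hz : ‖z‖ < 1) : 0 < ((2 - z) / 2).re := by
  have h2 : |z.re| ≤ ‖z‖ := Complex.abs_re_le_norm z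
  have := abs_le.1 h2
  have : ((2 - z) / 2).re = (2 - z.re) / 2 := by
    simp [Complex.div_re, Complex.sub_re, Complex.normSq]
  rw [this]
  linarith [(abs_le.1 h2).2]

private lemma ne_2m {z : ℂ} (hz : ‖z‖ < 1) : (2 : ℂ) - z ≠ 0 := by
  intro h
  have := re_pos_2m hz
  rw [h] at this
  simp at this

private lemma hasF17 (α β : ℝ) {z : ℂ} (hz : ‖z‖ < 1) :
    HasDerivAt (Fc17 α β) (Fc17' α β z) z := by
  have h1 : (1 : ℂ) + z ≠ 0 := ne_1p hz
  have h2 : (2 : ℂ) - z ≠ 0 := ne_2m hz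
  have hune : ((2 : ℂ) - z) / 2 ≠ 0 := div_ne_zero h2 two_ne_zero
  have hvne : (((1 : ℂ) + z) ^ 2)⁻¹ ≠ 0 := inv_ne_zero (pow_ne_zero _ h1)
  have hu : HasDerivAt (fun z : ℂ => (2 - z) / 2) (-1 / 2) z := by
    simpa using ((hasDerivAt_id z).const_sub 2).div_const 2
  have hu2 : HasDerivAt (fun z : ℂ => ((2 - z) / 2) ^ (α : ℂ))
      ((α : ℂ) * ((2 - z) / 2) ^ ((α : ℂ) - 1) * (-1 / 2)) z :=
    hu.cpow_const (Complex.mem_slitPlane_iff.2 (Or.inl (re_pos_2m hz)))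
  have hv0 : HasDerivAt (fun z : ℂ => (1 + z) ^ 2) (2 * (1 + z)) z := by
    simpa using ((hasDerivAt_id z).const_add 1).fun_pow 2
  have hv : HasDerivAt (fun z : ℂ => ((1 + z) ^ 2)⁻¹)
      (-(2 * (1 + z)) / ((1 + z) ^ 2) ^ 2) z := hv0.inv (pow_ne_zero _ h1)
  have hslit : (((1 : ℂ) + z) ^ 2)⁻¹ ∈ Complex.slitPlane :=
    slit_inv17 (slit_sq17 (re_pos_1p hz)) (pow_ne_zero _ h1)
  have hv2 : HasDerivAt (fun z : ℂ => (((1 + z) ^ 2)⁻¹) ^ (β : ℂ))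
      ((β : ℂ) * (((1 + z) ^ 2)⁻¹) ^ ((β : ℂ) - 1) * (-(2 * (1 + z)) / ((1 + z) ^ 2) ^ 2)) z :=
    hv.cpow_const hslit
  have := hu2.fun_mul hv2
  refine this.congr_deriv ?_
  have e1 : ((2 - z) / 2 : ℂ) ^ ((α : ℂ) - 1) = ((2 - z) / 2) ^ (α : ℂ) / ((2 - z) / 2) := by
    rw [Complex.cpow_sub _ _ hune, Complex.cpow_one]
  have e2 : ((((1 : ℂ) + z) ^ 2)⁻¹) ^ ((β : ℂ) - 1)
      = ((((1 : ℂ) + z) ^ 2)⁻¹) ^ (β : ℂ) / (((1 + z) ^ 2)⁻¹) := by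
    rw [Complex.cpow_sub _ _ hvne, Complex.cpow_one]
  simp only [Fc17, Fc17', e1, e2]
  field_simp
  ring

private lemma contFc17 (α β : ℝ) : ContinuousOn (Fc17 α β) (ball (0 : ℂ) 1) := fun z hz =>
  ((hasF17 α β (mem_ball_zero_iff.1 hz)).continuousAt).continuousWithinAt

private lemma contFc17' (α β : ℝ) : ContinuousOn (Fc17' α β) (ball (0 : ℂ) 1) := by
  apply (contFc17 α β).mul
  apply ContinuousOn.sub
  · exact continuousOn_const.div (by fun_prop) (fun z hz => ne_2m (mem_ball_zero_iff.1 hz))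
  · exact continuousOn_const.div (by fun_prop) (fun z hz => ne_1p (mem_ball_zero_iff.1 hz))

private lemma aux_meas17 {φ : ℝ → ℂ} (h : ContinuousOn φ (Set.Icc (0 : ℝ) 1)) :
    AEStronglyMeasurable φ (MeasureTheory.volume.restrict (Set.uIoc (0 : ℝ) 1)) := by
  refine (h.aestronglyMeasurable measurableSet_Icc).mono_measure
    (MeasureTheory.Measure.restrict_mono ?_ le_rfl)
  rw [Set.uIoc_of_le zero_le_one]
  exact Set.Ioc_subset_Icc_self

private lemma cont_in_t17 (α β : ℝ) {z : ℂ} (hz : ‖z‖ < 1)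
    {ψ : ℂ → ℂ} (hψ : ContinuousOn ψ (ball (0 : ℂ) 1)) :
    ContinuousOn (fun t : ℝ => ψ ((t : ℂ) * z)) (Set.Icc (0 : ℝ) 1) := by
  apply hψ.comp (by fun_prop)
  intro t ht
  rw [mem_ball_zero_iff]
  have : ‖(t : ℂ) * z‖ = |t| * ‖z‖ := by
    rw [norm_mul, Complex.norm_real, Real.norm_eq_abs]
  rw [this]
  rcases ht with ⟨h0, h1⟩
  have : |t| ≤ 1 := abs_le.2 ⟨by linarith, h1⟩
  calc |t| * ‖z‖ ≤ 1 * ‖z‖ := by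
        apply mul_le_mul_of_nonneg_right this (norm_nonneg z)
    _ < 1 := by rwa [one_mul]

private lemma key17 (α β : ℝ) {z₁ : ℂ} (h1 : ‖z₁‖ < 1) :
    HasDerivAt (fun z : ℂ => ∫ t in (0:ℝ)..1, Fc17 α β ((t : ℂ) * z) * z) (Fc17 α β z₁) z₁ := by
  set ρ : ℝ := (1 + ‖z₁‖) / 2 with hρ
  have hρ1 : ρ < 1 := by rw [hρ]; linarith
  have hρ0 : 0 ≤ ρ := by rw [hρ]; positivity
  set ε : ℝ := (1 - ‖z₁‖) / 2 with hε
  have hε0 : 0 < ε := by rw [hε]; linarith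
  -- norm bound on the ball
  have hballnorm : ∀ z ∈ ball z₁ ε, ‖z‖ ≤ ρ := by
    intro z hz
    rw [mem_ball, dist_eq_norm] at hz
    calc ‖z‖ = ‖z - z₁ + z₁‖ := by ring_nf
      _ ≤ ‖z - z₁‖ + ‖z₁‖ := norm_add_le _ _
      _ ≤ ε + ‖z₁‖ := by linarith
      _ ≤ ρ := by rw [hε, hρ]; linarith
  have htz : ∀ z : ℂ, ‖z‖ ≤ ρ → ∀ t : ℝ, t ∈ Set.uIoc (0:ℝ) 1 → ‖(t:ℂ) * z‖ < 1 := by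
    intro z hz t ht
    rw [Set.uIoc_of_le zero_le_one] at ht
    rw [norm_mul, Complex.norm_real, Real.norm_eq_abs, abs_of_pos ht.1]
    calc t * ‖z‖ ≤ 1 * ρ := by
          apply mul_le_mul ht.2 hz (norm_nonneg z) zero_le_one
      _ < 1 := by rwa [one_mul]
  -- bounds for Fc and Fc' on the closed ball of radius ρ
  obtain ⟨M₁, hM₁⟩ := (isCompact_closedBall (0:ℂ) ρ).exists_bound_of_continuousOn
    ((contFc17 α β).mono (fun w hw => mem_ball_zero_iff.2
      (lt_of_le_of_lt (mem_closedBall_zero_iff.1 hw) hρ1)))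
  obtain ⟨M₂, hM₂⟩ := (isCompact_closedBall (0:ℂ) ρ).exists_bound_of_continuousOn
    ((contFc17' α β).mono (fun w hw => mem_ball_zero_iff.2
      (lt_of_le_of_lt (mem_closedBall_zero_iff.1 hw) hρ1)))
  set P : ℂ → ℝ → ℂ := fun z t => Fc17' α β ((t:ℂ) * z) * (t:ℂ) * z + Fc17 α β ((t:ℂ) * z)
    with hP
  have key := intervalIntegral.hasDerivAt_integral_of_dominated_loc_of_deriv_le
    (μ := MeasureTheory.volume) (a := (0:ℝ)) (b := 1)
    (F := fun z t => Fc17 α β ((t:ℂ) * z) * z) (F' := P) (x₀ := z₁)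
    (bound := fun _ => max M₂ 0 * ρ + max M₁ 0) (ball_mem_nhds z₁ hε0)
    ?_ ?_ ?_ ?_ ?_ ?_
  · obtain ⟨hint, hder⟩ := key
    have ftc : ∀ t ∈ Set.uIcc (0:ℝ) 1,
        HasDerivAt (fun s : ℝ => (s : ℂ) * Fc17 α β ((s:ℂ) * z₁)) (P z₁ t) t := by
      intro t ht
      rw [Set.uIcc_of_le zero_le_one] at ht
      have htz1 : ‖(t:ℂ) * z₁‖ < 1 := by
        rw [norm_mul, Complex.norm_real, Real.norm_eq_abs, _root_.abs_of_nonneg ht.1]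
        calc t * ‖z₁‖ ≤ 1 * ‖z₁‖ :=
              mul_le_mul_of_nonneg_right ht.2 (norm_nonneg z₁)
          _ < 1 := by rwa [one_mul]
      have hinner : HasDerivAt (fun w : ℂ => Fc17 α β (w * z₁))
          (Fc17' α β ((t:ℂ) * z₁) * z₁) (t : ℂ) := by
        have := (hasF17 α β htz1).comp (t : ℂ)
          (by simpa using (hasDerivAt_id ((t:ℂ))).mul_const z₁)
        simpa [Function.comp_def] using this
      have hc : HasDerivAt (fun w : ℂ => w * Fc17 α β (w * z₁))
          (1 * Fc17 α β ((t:ℂ) * z₁) + (t:ℂ) * (Fc17' α β ((t:ℂ) * z₁) * z₁)) (t:ℂ) :=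
        (hasDerivAt_id ((t:ℂ))).mul hinner
      have := hc.comp_ofReal
      convert this using 1
      rw [hP]
      ring
    have heval : (∫ t in (0:ℝ)..1, P z₁ t) = Fc17 α β z₁ := by
      rw [intervalIntegral.integral_eq_sub_of_hasDerivAt ftc hint]
      simp
    rwa [heval] at hder
  · -- hF_meas
    have : ∀ᶠ z in nhds z₁, ‖z‖ < 1 := by
      have : Continuous fun z : ℂ => ‖z‖ := continuous_norm
      exact this.continuousAt.eventually_lt continuousAt_const h1
    filter_upwards [this] with z hz
    exact aux_meas17 ((cont_in_t17 α β hz (contFc17 α β)).mul continuousOn_const)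
  · -- hF_int
    apply ContinuousOn.intervalIntegrable
    rw [Set.uIcc_of_le zero_le_one]
    exact (cont_in_t17 α β h1 (contFc17 α β)).mul continuousOn_const
  · -- hF'_meas
    apply aux_meas17
    exact (((cont_in_t17 α β h1 (contFc17' α β)).mul (by fun_prop)).mul
      continuousOn_const).add (cont_in_t17 α β h1 (contFc17 α β))
  · -- h_bound
    refine Filter.Eventually.of_forall (fun t ht z hz => ?_)
    have hzρ := hballnorm z hz
    have htz1 : ‖(t:ℂ) * z‖ < 1 := htz z hzρ t ht
    have htmem : (t:ℂ) * z ∈ closedBall (0:ℂ) ρ := by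
      rw [mem_closedBall_zero_iff]
      rw [Set.uIoc_of_le zero_le_one] at ht
      rw [norm_mul, Complex.norm_real, Real.norm_eq_abs, abs_of_pos ht.1]
      calc t * ‖z‖ ≤ 1 * ρ := mul_le_mul ht.2 hzρ (norm_nonneg z) zero_le_one
        _ = ρ := one_mul ρ
    have htle : |t| ≤ 1 := by
      rw [Set.uIoc_of_le zero_le_one] at ht
      exact abs_le.2 ⟨by linarith [ht.1.le], ht.2⟩
    rw [hP]
    calc ‖Fc17' α β ((t:ℂ) * z) * (t:ℂ) * z + Fc17 α β ((t:ℂ) * z)‖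
        ≤ ‖Fc17' α β ((t:ℂ) * z) * (t:ℂ) * z‖ + ‖Fc17 α β ((t:ℂ) * z)‖ := norm_add_le _ _
      _ ≤ max M₂ 0 * ρ + max M₁ 0 := by
          gcongr
          · rw [norm_mul, norm_mul, Complex.norm_real, Real.norm_eq_abs]
            calc ‖Fc17' α β ((t:ℂ) * z)‖ * |t| * ‖z‖
                ≤ max M₂ 0 * 1 * ρ := by
                  gcongr
                  · exact le_trans (hM₂ _ htmem) (le_max_left _ _)
              _ = max M₂ 0 * ρ := by ring
          · exact le_trans (hM₁ _ htmem) (le_max_left _ _)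
  · -- bound integrable
    exact intervalIntegrable_const
  · -- h_diff
    refine Filter.Eventually.of_forall (fun t ht z hz => ?_)
    have htz1 : ‖(t:ℂ) * z‖ < 1 := htz z (hballnorm z hz) t ht
    have hinner : HasDerivAt (fun z : ℂ => Fc17 α β ((t:ℂ) * z))
        (Fc17' α β ((t:ℂ) * z) * (t:ℂ)) z := by
      have := (hasF17 α β htz1).comp z
        (by simpa using (hasDerivAt_id z).const_mul ((t:ℂ)))
      simpa [Function.comp_def] using this
    have := hinner.fun_mul (hasDerivAt_id z)
    rw [hP]
    simpa using this

private lemma derivg17 {g : ℂ → ℂ} (hgdef : ∀ z : ℂ, g z = z / (1 + z)) {w : ℂ}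
    (hw : (1 : ℂ) + w ≠ 0) : deriv g w = (((1 : ℂ) + w) ^ 2)⁻¹ := by
  have hg : g = fun z => z / (1 + z) := funext hgdef
  have h : HasDerivAt g ((((1:ℂ) + w) ^ 2)⁻¹) w := by
    rw [hg]
    have := (hasDerivAt_id w).div ((hasDerivAt_id w).const_add 1) hw
    refine this.congr_deriv ?_
    simp only [id]
    field_simp
    ring
  exact h.deriv

/-- for `f(z) = (1-(1-z)²)/2`, `g(z) = z/(1+z)`, `β > 0` and `α + β > 1`,
at `z₀ = 2/(α+β+1) ∈ (0,1)` one has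
`1 + z₀ C''/C' = (2-(1+α)z₀)/(2-z₀) - 2βz₀/(1+z₀) = -3β(α+β-1)/((α+β)(α+β+3)) < 0`;
hence `C_{α,β}[f,g]` is not convex. -/
theorem stmt_17 (α β : ℝ) (hβ : 0 < β) (hαβ : 1 < α + β)
    (f g : ℂ → ℂ)
    (hfdef : ∀ z : ℂ, f z = (1 - (1 - z) ^ 2) / 2)
    (hgdef : ∀ z : ℂ, g z = z / (1 + z))
    (C : ℂ → ℂ)
    (hC : ∀ z ∈ ball (0:ℂ) 1,
      C z = ∫ t in (0:ℝ)..1,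
        (f ((t : ℂ) * z) / ((t : ℂ) * z)) ^ (α : ℂ)
          * (deriv g ((t : ℂ) * z)) ^ (β : ℂ) * z) :
    (0 < 2 / (α + β + 1) ∧ 2 / (α + β + 1) < 1) ∧
    (1 + ((2 / (α + β + 1) : ℝ) : ℂ)
        * deriv (deriv C) ((2 / (α + β + 1) : ℝ) : ℂ)
        / deriv C ((2 / (α + β + 1) : ℝ) : ℂ)
      = (2 - (1 + (α : ℂ)) * ((2 / (α + β + 1) : ℝ) : ℂ)) / (2 - ((2 / (α + β + 1) : ℝ) : ℂ))
        - 2 * (β : ℂ) * ((2 / (α + β + 1) : ℝ) : ℂ) / (1 + ((2 / (α + β + 1) : ℝ) : ℂ))) ∧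
    (1 + ((2 / (α + β + 1) : ℝ) : ℂ)
        * deriv (deriv C) ((2 / (α + β + 1) : ℝ) : ℂ)
        / deriv C ((2 / (α + β + 1) : ℝ) : ℂ)
      = ((-3 * β * (α + β - 1) / ((α + β) * (α + β + 3)) : ℝ) : ℂ)) ∧
    ((1 + ((2 / (α + β + 1) : ℝ) : ℂ)
        * deriv (deriv C) ((2 / (α + β + 1) : ℝ) : ℂ)
        / deriv C ((2 / (α + β + 1) : ℝ) : ℂ)).re < 0) ∧
    ¬ (∀ z ∈ ball (0:ℂ) 1, 0 < (1 + z * deriv (deriv C) z / deriv C z).re) := by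
  set z₀ : ℝ := 2 / (α + β + 1) with hz₀def
  have h0z : 0 < z₀ := by rw [hz₀def]; positivity
  have h1z : z₀ < 1 := by
    rw [hz₀def, div_lt_one (by linarith)]; linarith
  set w₀ : ℂ := ((z₀ : ℝ) : ℂ) with hw₀
  have hw₀norm : ‖w₀‖ < 1 := by
    rw [hw₀, Complex.norm_real, Real.norm_eq_abs, _root_.abs_of_pos h0z]; exact h1z
  have hCeq : ∀ z : ℂ, z ≠ 0 → ‖z‖ < 1 →
      C z = ∫ t in (0:ℝ)..1, Fc17 α β ((t:ℂ) * z) * z := by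
    intro z hz0 hz1
    rw [hC z (mem_ball_zero_iff.2 hz1)]
    apply intervalIntegral.integral_congr_ae
    refine Filter.Eventually.of_forall (fun t ht => ?_)
    rw [Set.uIoc_of_le zero_le_one] at ht
    have ht0 : (0:ℝ) < t := ht.1
    have htr : (t:ℂ) ≠ 0 := by exact_mod_cast ht0.ne'
    have htz0 : (t:ℂ) * z ≠ 0 := mul_ne_zero htr hz0
    have htz1 : ‖(t:ℂ) * z‖ < 1 := by
      rw [norm_mul, Complex.norm_real, Real.norm_eq_abs, _root_.abs_of_pos ht0]
      calc t * ‖z‖ ≤ 1 * ‖z‖ := mul_le_mul_of_nonneg_right ht.2 (norm_nonneg z)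
        _ < 1 := by rwa [one_mul]
    have hfq : f ((t:ℂ) * z) / ((t:ℂ) * z) = (2 - (t:ℂ) * z) / 2 := by
      rw [hfdef]; field_simp; ring
    rw [hfq, derivg17 hgdef (ne_1p htz1)]
    rfl
  set ε' : ℝ := min (z₀ / 2) ((1 - z₀) / 2) with hε'
  have hε'0 : 0 < ε' := lt_min (by linarith) (by linarith)
  have hCd : ∀ z ∈ ball w₀ ε', HasDerivAt C (Fc17 α β z) z := by
    intro z hz
    rw [mem_ball, dist_eq_norm] at hz
    have hmin1 := min_le_left (z₀ / 2) ((1 - z₀) / 2)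
    have hmin2 := min_le_right (z₀ / 2) ((1 - z₀) / 2)
    have hw₀n : ‖w₀‖ = z₀ := by
      rw [hw₀, Complex.norm_real, Real.norm_eq_abs, _root_.abs_of_pos h0z]
    have hz1 : ‖z‖ < 1 := by
      calc ‖z‖ = ‖z - w₀ + w₀‖ := by ring_nf
        _ ≤ ‖z - w₀‖ + ‖w₀‖ := norm_add_le _ _
        _ < ε' + z₀ := by rw [hw₀n]; linarith
        _ ≤ (1 - z₀) / 2 + z₀ := by linarith
        _ < 1 := by linarith
    have hz0 : z ≠ 0 := by
      intro h
      rw [h, zero_sub, norm_neg, hw₀n] at hz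
      linarith
    refine (key17 α β hz1).congr_of_eventuallyEq ?_
    have hopen : IsOpen {w : ℂ | w ≠ 0 ∧ ‖w‖ < 1} :=
      IsOpen.and isOpen_ne (isOpen_lt continuous_norm continuous_const)
    have hev : ∀ᶠ w in nhds z, w ≠ 0 ∧ ‖w‖ < 1 := hopen.mem_nhds ⟨hz0, hz1⟩
    filter_upwards [hev] with w hw
    exact hCeq w hw.1 hw.2
  have hderivC : deriv C w₀ = Fc17 α β w₀ := (hCd w₀ (mem_ball_self hε'0)).deriv
  have hevF : deriv C =ᶠ[nhds w₀] Fc17 α β := by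
    filter_upwards [isOpen_ball.mem_nhds (mem_ball_self hε'0)] with z hz
    exact (hCd z hz).deriv
  have hdd : deriv (deriv C) w₀ = Fc17' α β w₀ := by
    rw [hevF.deriv_eq]
    exact (hasF17 α β hw₀norm).deriv
  -- nonvanishing facts
  have h2w : (2:ℂ) - w₀ ≠ 0 := ne_2m hw₀norm
  have h1w : (1:ℂ) + w₀ ≠ 0 := ne_1p hw₀norm
  have hFne : Fc17 α β w₀ ≠ 0 := by
    apply mul_ne_zero
    · simp only [ne_eq, Complex.cpow_eq_zero_iff, not_and_or, not_not]
      left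
      exact div_ne_zero h2w two_ne_zero
    · simp only [ne_eq, Complex.cpow_eq_zero_iff, not_and_or, not_not]
      left
      exact inv_ne_zero (pow_ne_zero _ h1w)
  have hkey : 1 + w₀ * deriv (deriv C) w₀ / deriv C w₀
      = 1 + w₀ * (-(α:ℂ) / (2 - w₀) - 2 * (β:ℂ) / (1 + w₀)) := by
    rw [hdd, hderivC]
    simp only [Fc17']
    congr 1
    rw [mul_comm (Fc17 α β w₀), ← mul_assoc, mul_div_assoc,
      div_self hFne, mul_one]
  have hw₀c : w₀ = 2 / ((α:ℂ) + (β:ℂ) + 1) := by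
    rw [hw₀, hz₀def]
    push_cast
    ring
  have hne1 : (α:ℂ) + (β:ℂ) + 1 ≠ 0 := by
    have : ((α + β + 1 : ℝ) : ℂ) ≠ 0 := Complex.ofReal_ne_zero.2 (by linarith)
    push_cast at this
    convert this using 1
  have hne0 : (α:ℂ) + (β:ℂ) ≠ 0 := by
    have : ((α + β : ℝ) : ℂ) ≠ 0 := Complex.ofReal_ne_zero.2 (by linarith)
    push_cast at this
    convert this using 1
  have hne3 : (α:ℂ) + (β:ℂ) + 3 ≠ 0 := by
    have : ((α + β + 3 : ℝ) : ℂ) ≠ 0 := Complex.ofReal_ne_zero.2 (by linarith)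
    push_cast at this
    convert this using 1
  have hB : 1 + w₀ * deriv (deriv C) w₀ / deriv C w₀
      = ((-3 * β * (α + β - 1) / ((α + β) * (α + β + 3)) : ℝ) : ℂ) := by
    rw [hkey]
    have e2 : (2:ℂ) - w₀ = 2 * ((α:ℂ) + β) / ((α:ℂ) + β + 1) := by
      rw [hw₀c]; field_simp; ring
    have e1 : (1:ℂ) + w₀ = ((α:ℂ) + β + 3) / ((α:ℂ) + β + 1) := by
      rw [hw₀c]; field_simp; ring
    rw [e2, e1, hw₀c]
    push_cast
    field_simp [hne0, hne1, hne3]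
    ring
  have hA : 1 + w₀ * deriv (deriv C) w₀ / deriv C w₀
      = (2 - (1 + (α:ℂ)) * w₀) / (2 - w₀) - 2 * (β:ℂ) * w₀ / (1 + w₀) := by
    rw [hkey]
    field_simp
    ring
  have hRe : (1 + w₀ * deriv (deriv C) w₀ / deriv C w₀).re < 0 := by
    rw [hB, Complex.ofReal_re]
    apply div_neg_of_neg_of_pos
    · nlinarith
    · have h1 : 0 < α + β := by linarith
      have h2 : 0 < α + β + 3 := by linarith
      exact mul_pos h1 h2
  refine ⟨⟨h0z, h1z⟩, hA, hB, hRe, ?_⟩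
  intro hcv
  have := hcv w₀ (mem_ball_zero_iff.2 hw₀norm)
  linarith
end

section
/- Let f(z) = [(1+z)²-1]/2 and g(z) = z/(1+z), and let α, β be real with β > 0 and 3β - α - 3 > 0. Then at z = 2/(3β-α-1) ∈ (0,1), Re(1 + z C_{α,β}[f,g]''(z)/C_{α,β}[f,g]'(z)) = β(α - 3β + 3)/((3β-α)(3β-α+1)) < 0; hence C_{α,β}[f,g] is not convex. -/
open Complex Metric

open Topology Filter

noncomputable def st18phi (α β : ℝ) (w : ℂ) : ℂ :=
  (1 + w / 2) ^ (α : ℂ) * (((1 + w) ^ 2)⁻¹) ^ (β : ℂ)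

noncomputable def st18dphi (α β : ℝ) (w : ℂ) : ℂ :=
  (α : ℂ) * (1 + w / 2) ^ ((α : ℂ) - 1) * (2⁻¹ : ℂ) * (((1 + w) ^ 2)⁻¹) ^ (β : ℂ)
    + (1 + w / 2) ^ (α : ℂ) *
      ((β : ℂ) * (((1 + w) ^ 2)⁻¹) ^ ((β : ℂ) - 1) * (-(2 * (1 + w)) / ((1 + w) ^ 2) ^ 2))

lemma st18_re_pos {w : ℂ} (hw : ‖w‖ < 1) : 0 < (1 + w).re := by
  have h := Complex.abs_re_le_norm w
  simp only [Complex.add_re, Complex.one_re]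
  cases abs_le.1 h with
  | intro h1 h2 => linarith

lemma st18_slit1 {w : ℂ} (hw : ‖w‖ < 1) : 1 + w / 2 ∈ Complex.slitPlane := by
  rw [Complex.mem_slitPlane_iff]
  left
  have h := Complex.abs_re_le_norm w
  have : (1 + w / 2).re = 1 + w.re / 2 := by
    simp [Complex.add_re, Complex.div_re, Complex.normSq]
  rw [this]
  cases abs_le.1 h with
  | intro h1 h2 => linarith

lemma st18_ne {w : ℂ} (hw : ‖w‖ < 1) : (1 + w) ≠ 0 := by
  intro h
  have := st18_re_pos hw
  rw [h] at this
  simp at this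

lemma st18_slit2 {w : ℂ} (hw : ‖w‖ < 1) : ((1 + w) ^ 2)⁻¹ ∈ Complex.slitPlane := by
  rw [Complex.mem_slitPlane_iff]
  set c := 1 + w with hc
  have hre : 0 < c.re := st18_re_pos hw
  have hne : c ≠ 0 := st18_ne hw
  have hsq : c ^ 2 ≠ 0 := pow_ne_zero _ hne
  have hnormSq : 0 < Complex.normSq (c ^ 2) := Complex.normSq_pos.2 hsq
  have hre2 : (c ^ 2).re = c.re ^ 2 - c.im ^ 2 := by
    rw [sq]; simp [Complex.mul_re]; ring
  have him2 : (c ^ 2).im = 2 * c.re * c.im := by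
    rw [sq]; simp [Complex.mul_im]; ring
  by_cases him : c.im = 0
  · left
    rw [Complex.inv_re, hre2, him]
    apply div_pos _ hnormSq
    nlinarith [hre]
  · right
    rw [Complex.inv_im, him2]
    exact div_ne_zero (neg_ne_zero.2 (mul_ne_zero (mul_ne_zero two_ne_zero hre.ne') him))
      hnormSq.ne'

lemma st18_hasDerivAt_base1 (γ : ℂ) {w : ℂ} (hw : ‖w‖ < 1) :
    HasDerivAt (fun w : ℂ => (1 + w / 2) ^ γ) (γ * (1 + w / 2) ^ (γ - 1) * 2⁻¹) w := by
  have h : HasDerivAt (fun w : ℂ => 1 + w / 2) 2⁻¹ w := by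
    simpa using ((hasDerivAt_id w).div_const 2).const_add 1
  exact h.cpow_const (st18_slit1 hw)

lemma st18_hasDerivAt_u {w : ℂ} (hw : ‖w‖ < 1) :
    HasDerivAt (fun w : ℂ => ((1 + w) ^ 2)⁻¹) (-(2 * (1 + w)) / ((1 + w) ^ 2) ^ 2) w := by
  have h : HasDerivAt (fun w : ℂ => (1 + w) ^ 2) (2 * (1 + w)) w := by
    simpa using ((hasDerivAt_id w).const_add 1).fun_pow 2
  exact h.inv (pow_ne_zero _ (st18_ne hw))

lemma st18_hasDerivAt_base2 (γ : ℂ) {w : ℂ} (hw : ‖w‖ < 1) :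
    HasDerivAt (fun w : ℂ => (((1 + w) ^ 2)⁻¹) ^ γ)
      (γ * (((1 + w) ^ 2)⁻¹) ^ (γ - 1) * (-(2 * (1 + w)) / ((1 + w) ^ 2) ^ 2)) w :=
  (st18_hasDerivAt_u hw).cpow_const (st18_slit2 hw)

lemma st18_hasDerivAt_phi (α β : ℝ) {w : ℂ} (hw : ‖w‖ < 1) :
    HasDerivAt (st18phi α β) (st18dphi α β w) w := by
  exact
    (st18_hasDerivAt_base1 (α : ℂ) hw).fun_mul (st18_hasDerivAt_base2 (β : ℂ) hw)

lemma st18_contAt_phi (α β : ℝ) {w : ℂ} (hw : ‖w‖ < 1) : ContinuousAt (st18phi α β) w :=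
  (st18_hasDerivAt_phi α β hw).continuousAt

lemma st18_contAt_dphi (α β : ℝ) {w : ℂ} (hw : ‖w‖ < 1) : ContinuousAt (st18dphi α β) w := by
  have h1 := (st18_hasDerivAt_base1 ((α : ℂ) - 1) hw).continuousAt
  have h2 := (st18_hasDerivAt_base2 (β : ℂ) hw).continuousAt
  have h3 := (st18_hasDerivAt_base1 (α : ℂ) hw).continuousAt
  have h4 := (st18_hasDerivAt_base2 ((β : ℂ) - 1) hw).continuousAt
  have hu' : ContinuousAt (fun w : ℂ => -(2 * (1 + w)) / ((1 + w) ^ 2) ^ 2) w := by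
    apply ContinuousAt.div (by fun_prop) (by fun_prop)
    exact pow_ne_zero 2 (pow_ne_zero 2 (st18_ne hw))
  exact (((continuousAt_const.mul h1).mul continuousAt_const).mul h2).add
    (h3.mul ((continuousAt_const.mul h4).mul hu'))

lemma st18_norm_mul_lt {t : ℝ} (ht : |t| ≤ 1) {x : ℂ} (hx : ‖x‖ < 1) : ‖(t : ℂ) * x‖ < 1 := by
  rw [norm_mul, Complex.norm_real, Real.norm_eq_abs]
  calc |t| * ‖x‖ ≤ 1 * ‖x‖ := by
        apply mul_le_mul_of_nonneg_right ht (norm_nonneg x)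
    _ < 1 := by simpa using hx

lemma st18_hasDerivAt_G (α β : ℝ) {x₀ : ℂ} (hx₀ : ‖x₀‖ < 1) :
    HasDerivAt (fun z : ℂ => ∫ t in (0:ℝ)..1, st18phi α β ((t : ℂ) * z) * z)
      (st18phi α β x₀) x₀ := by
  set ε := (1 - ‖x₀‖) / 2 with hε
  have h1ε : 0 < 1 - ‖x₀‖ := by linarith
  have hε_pos : 0 < ε := by positivity
  have hr : ∀ x ∈ closedBall x₀ ε, ‖x‖ < 1 := by
    intro x hx
    rw [mem_closedBall, dist_eq_norm] at hx
    have : ‖x‖ ≤ ‖x₀‖ + ‖x - x₀‖ := by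
      calc ‖x‖ = ‖x₀ + (x - x₀)‖ := by ring_nf
        _ ≤ ‖x₀‖ + ‖x - x₀‖ := norm_add_le _ _
    have : ‖x‖ ≤ ‖x₀‖ + ε := by linarith
    rw [hε] at this; linarith
  obtain ⟨M, hM⟩ : ∃ M, ∀ p ∈ (Set.Icc (0:ℝ) 1 ×ˢ closedBall x₀ ε),
      ‖st18dphi α β ((p.1 : ℂ) * p.2) * (p.1 : ℂ) * p.2 + st18phi α β ((p.1 : ℂ) * p.2)‖ ≤ M := by
    apply IsCompact.exists_bound_of_continuousOn (isCompact_Icc.prod (isCompact_closedBall _ _))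
    intro p hp
    have hpt : |p.1| ≤ 1 := by
      rw [abs_le]; exact ⟨by linarith [hp.1.1], hp.1.2⟩
    have hmem : ‖(p.1 : ℂ) * p.2‖ < 1 := st18_norm_mul_lt hpt (hr _ hp.2)
    have hc : ContinuousAt (fun p : ℝ × ℂ => (p.1 : ℂ) * p.2) p := by fun_prop
    apply ContinuousAt.continuousWithinAt
    have hdc : ContinuousAt (fun p : ℝ × ℂ => st18dphi α β ((p.1 : ℂ) * p.2)) p :=
      ContinuousAt.comp (f := fun p : ℝ × ℂ => (p.1 : ℂ) * p.2) (st18_contAt_dphi α β hmem) hc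
    have hpc : ContinuousAt (fun p : ℝ × ℂ => st18phi α β ((p.1 : ℂ) * p.2)) p :=
      ContinuousAt.comp (f := fun p : ℝ × ℂ => (p.1 : ℂ) * p.2) (st18_contAt_phi α β hmem) hc
    have c1 : ContinuousAt (fun p : ℝ × ℂ => ((p.1 : ℝ) : ℂ)) p := by fun_prop
    have c2 : ContinuousAt (fun p : ℝ × ℂ => p.2) p := by fun_prop
    exact ((hdc.mul c1).mul c2).add hpc
  have key := intervalIntegral.hasDerivAt_integral_of_dominated_loc_of_deriv_le
    (F := fun (x : ℂ) (t : ℝ) => st18phi α β ((t : ℂ) * x) * x)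
    (F' := fun (x : ℂ) (t : ℝ) =>
      st18dphi α β ((t : ℂ) * x) * (t : ℂ) * x + st18phi α β ((t : ℂ) * x))
    (x₀ := x₀) (a := 0) (b := 1) (μ := MeasureTheory.volume) (bound := fun _ => M)
    (ball_mem_nhds x₀ hε_pos) ?_ ?_ ?_ ?_ ?_ ?_
  · have hint : (∫ t in (0:ℝ)..1,
        (st18dphi α β ((t : ℂ) * x₀) * (t : ℂ) * x₀ + st18phi α β ((t : ℂ) * x₀)))
        = st18phi α β x₀ := by
      rw [intervalIntegral.integral_eq_sub_of_hasDerivAt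
        (f := fun t : ℝ => (t : ℂ) * st18phi α β ((t : ℂ) * x₀)) ?_ key.1]
      · norm_num
      · intro t ht
        rw [Set.uIcc_of_le (by norm_num : (0:ℝ) ≤ 1)] at ht
        have hta : |t| ≤ 1 := by rw [abs_le]; exact ⟨by linarith [ht.1], ht.2⟩
        have htx : ‖(t : ℂ) * x₀‖ < 1 := st18_norm_mul_lt hta hx₀
        have hi : HasDerivAt (fun w : ℂ => st18phi α β (w * x₀))
            (st18dphi α β ((t : ℂ) * x₀) * x₀) (t : ℂ) := by
          simpa [Function.comp_def] using (st18_hasDerivAt_phi α β htx).comp (t : ℂ)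
            ((hasDerivAt_id ((t : ℂ))).mul_const x₀)
        have e1 := (hasDerivAt_id ((t : ℂ))).fun_mul hi
        have e2 := e1.comp_ofReal
        refine e2.congr_deriv ?_
        simp only [id_eq]
        ring
    rw [← hint]
    exact key.2
  · -- hF_meas
    have hb : ball (0:ℂ) 1 ∈ 𝓝 x₀ := isOpen_ball.mem_nhds (mem_ball_zero_iff.2 hx₀)
    filter_upwards [hb] with x hx
    rw [mem_ball_zero_iff] at hx
    apply ContinuousOn.aestronglyMeasurable _ measurableSet_uIoc
    intro t ht
    rw [Set.uIoc_of_le (by norm_num : (0:ℝ) ≤ 1)] at ht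
    have hta : |t| ≤ 1 := by rw [abs_le]; exact ⟨by linarith [ht.1], ht.2⟩
    have htx : ‖(t : ℂ) * x‖ < 1 := st18_norm_mul_lt hta hx
    have hpc : ContinuousAt (fun t : ℝ => st18phi α β ((t : ℂ) * x)) t :=
      ContinuousAt.comp (f := fun t : ℝ => (t : ℂ) * x) (st18_contAt_phi α β htx) (by fun_prop)
    exact (hpc.mul continuousAt_const).continuousWithinAt
  · -- hF_int
    apply ContinuousOn.intervalIntegrable
    intro t ht
    rw [Set.uIcc_of_le (by norm_num : (0:ℝ) ≤ 1)] at ht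
    have hta : |t| ≤ 1 := by rw [abs_le]; exact ⟨by linarith [ht.1], ht.2⟩
    have htx : ‖(t : ℂ) * x₀‖ < 1 := st18_norm_mul_lt hta hx₀
    have hpc : ContinuousAt (fun t : ℝ => st18phi α β ((t : ℂ) * x₀)) t :=
      ContinuousAt.comp (f := fun t : ℝ => (t : ℂ) * x₀) (st18_contAt_phi α β htx) (by fun_prop)
    exact (hpc.mul continuousAt_const).continuousWithinAt
  · -- hF'_meas
    apply ContinuousOn.aestronglyMeasurable _ measurableSet_uIoc
    intro t ht
    rw [Set.uIoc_of_le (by norm_num : (0:ℝ) ≤ 1)] at ht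
    have hta : |t| ≤ 1 := by rw [abs_le]; exact ⟨by linarith [ht.1], ht.2⟩
    have htx : ‖(t : ℂ) * x₀‖ < 1 := st18_norm_mul_lt hta hx₀
    have hc : ContinuousAt (fun t : ℝ => (t : ℂ) * x₀) t := by fun_prop
    have hdc : ContinuousAt (fun t : ℝ => st18dphi α β ((t : ℂ) * x₀)) t :=
      ContinuousAt.comp (f := fun t : ℝ => (t : ℂ) * x₀) (st18_contAt_dphi α β htx) hc
    have hpc : ContinuousAt (fun t : ℝ => st18phi α β ((t : ℂ) * x₀)) t :=
      ContinuousAt.comp (f := fun t : ℝ => (t : ℂ) * x₀) (st18_contAt_phi α β htx) hc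
    have c1 : ContinuousAt (fun t : ℝ => ((t : ℝ) : ℂ)) t := by fun_prop
    exact (((hdc.mul c1).mul continuousAt_const).add hpc).continuousWithinAt
  · -- h_bound
    apply MeasureTheory.ae_of_all
    intro t ht x hx
    rw [Set.uIoc_of_le (by norm_num : (0:ℝ) ≤ 1)] at ht
    exact hM (t, x) ⟨Set.Ioc_subset_Icc_self ht, ball_subset_closedBall hx⟩
  · exact intervalIntegrable_const
  · -- h_diff
    apply MeasureTheory.ae_of_all
    intro t ht x hx
    rw [Set.uIoc_of_le (by norm_num : (0:ℝ) ≤ 1)] at ht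
    have hta : |t| ≤ 1 := by rw [abs_le]; exact ⟨le_of_lt (by linarith [ht.1]), ht.2⟩
    have hxn : ‖x‖ < 1 := hr x (ball_subset_closedBall hx)
    have htx : ‖(t : ℂ) * x‖ < 1 := st18_norm_mul_lt hta hxn
    have h1 : HasDerivAt (fun x : ℂ => (t : ℂ) * x) (t : ℂ) x := by
      simpa using (hasDerivAt_id x).const_mul (t : ℂ)
    have h2 : HasDerivAt (fun x : ℂ => st18phi α β ((t : ℂ) * x))
        (st18dphi α β ((t : ℂ) * x) * (t : ℂ)) x :=
      (st18_hasDerivAt_phi α β htx).comp x h1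
    simpa using h2.fun_mul (hasDerivAt_id x)



/-- for `f(z) = ((1+z)²-1)/2`, `g(z) = z/(1+z)`, `β > 0` and `3β - α - 3 > 0`,
at `z₀ = 2/(3β-α-1) ∈ (0,1)` one has
`Re (1 + z₀ C''/C') = β(α-3β+3)/((3β-α)(3β-α+1)) < 0`; hence `C_{α,β}[f,g]` is not convex. -/
theorem stmt_18 (α β : ℝ) (hβ : 0 < β) (hαβ : 0 < 3 * β - α - 3)
    (f g : ℂ → ℂ)
    (hfdef : ∀ z : ℂ, f z = ((1 + z) ^ 2 - 1) / 2)
    (hgdef : ∀ z : ℂ, g z = z / (1 + z))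
    (C : ℂ → ℂ)
    (hC : ∀ z ∈ ball (0:ℂ) 1,
      C z = ∫ t in (0:ℝ)..1,
        (f ((t : ℂ) * z) / ((t : ℂ) * z)) ^ (α : ℂ)
          * (deriv g ((t : ℂ) * z)) ^ (β : ℂ) * z) :
    (0 < 2 / (3 * β - α - 1) ∧ 2 / (3 * β - α - 1) < 1) ∧
    ((1 + ((2 / (3 * β - α - 1) : ℝ) : ℂ)
        * deriv (deriv C) ((2 / (3 * β - α - 1) : ℝ) : ℂ)
        / deriv C ((2 / (3 * β - α - 1) : ℝ) : ℂ)).re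
      = β * (α - 3 * β + 3) / ((3 * β - α) * (3 * β - α + 1))) ∧
    (β * (α - 3 * β + 3) / ((3 * β - α) * (3 * β - α + 1)) < 0) ∧
    ¬ (∀ z ∈ ball (0:ℂ) 1, 0 < (1 + z * deriv (deriv C) z / deriv C z).re) := by
  have hd2' : 2 < 3 * β - α - 1 := by linarith
  set z₀ : ℝ := 2 / (3 * β - α - 1) with hz₀def
  have hz0pos : 0 < z₀ := by rw [hz₀def]; positivity
  have hz0lt : z₀ < 1 := by rw [hz₀def, div_lt_one (by linarith)]; linarith
  have hz₀n : ‖(z₀ : ℂ)‖ < 1 := by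
    rw [Complex.norm_real, Real.norm_eq_abs, abs_of_pos hz0pos]; exact hz0lt
  have part3 : β * (α - 3 * β + 3) / ((3 * β - α) * (3 * β - α + 1)) < 0 := by
    apply div_neg_of_neg_of_pos
    · exact mul_neg_of_pos_of_neg hβ (by linarith)
    · exact mul_pos (by linarith) (by linarith)
  -- the neighbourhood V
  set ε₀ : ℝ := min (z₀ / 2) ((1 - z₀) / 2) with hε₀def
  have hε₀pos : 0 < ε₀ := lt_min (by positivity) (by linarith)
  have hV : ∀ z ∈ ball ((z₀ : ℂ)) ε₀, ‖z‖ < 1 ∧ z ≠ 0 := by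
    intro z hz
    rw [mem_ball, dist_eq_norm] at hz
    have h1 : ‖z‖ ≤ ‖(z₀ : ℂ)‖ + ‖z - (z₀ : ℂ)‖ := by
      calc ‖z‖ = ‖(z₀ : ℂ) + (z - (z₀ : ℂ))‖ := by ring_nf
        _ ≤ _ := norm_add_le _ _
    have h2 : ‖(z₀ : ℂ)‖ - ‖z - (z₀ : ℂ)‖ ≤ ‖z‖ := by
      have h3 := norm_sub_norm_le ((z₀ : ℂ)) z
      rw [norm_sub_rev] at h3
      linarith
    have hza : ‖(z₀ : ℂ)‖ = z₀ := by
      rw [Complex.norm_real, Real.norm_eq_abs, abs_of_pos hz0pos]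
    have he1 : ε₀ ≤ z₀ / 2 := min_le_left _ _
    have he2 : ε₀ ≤ (1 - z₀) / 2 := min_le_right _ _
    constructor
    · rw [hza] at h1; linarith
    · intro hz0
      rw [hz0, norm_zero] at h2
      rw [hza] at h2
      rw [hz0, zero_sub, norm_neg, hza] at hz
      linarith
  -- C agrees with the phi-integral on V
  have hCG : ∀ z ∈ ball ((z₀ : ℂ)) ε₀,
      C z = ∫ t in (0:ℝ)..1, st18phi α β ((t : ℂ) * z) * z := by
    intro z hz
    obtain ⟨hzn, hzne⟩ := hV z hz
    rw [hC z (mem_ball_zero_iff.2 hzn)]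
    apply intervalIntegral.integral_congr_ae
    apply MeasureTheory.ae_of_all
    intro t ht
    rw [Set.uIoc_of_le (by norm_num : (0:ℝ) ≤ 1)] at ht
    have hta : |t| ≤ 1 := by rw [abs_le]; exact ⟨by linarith [ht.1], ht.2⟩
    have htx : ‖(t : ℂ) * z‖ < 1 := st18_norm_mul_lt hta hzn
    have htzne : (t : ℂ) * z ≠ 0 :=
      mul_ne_zero (by exact_mod_cast ne_of_gt ht.1) hzne
    have hne1 : 1 + (t : ℂ) * z ≠ 0 := st18_ne htx
    have hfq : f ((t : ℂ) * z) / ((t : ℂ) * z) = 1 + (t : ℂ) * z / 2 := by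
      rw [hfdef]
      field_simp [left_ne_zero_of_mul htzne]
      ring
    have hder : deriv g ((t : ℂ) * z) = ((1 + (t : ℂ) * z) ^ 2)⁻¹ := by
      have hgf : g = fun w => w / (1 + w) := funext hgdef
      rw [hgf]
      have hdd : HasDerivAt (fun w : ℂ => w / (1 + w))
          (((1 + (t : ℂ) * z) ^ 2)⁻¹) ((t : ℂ) * z) := by
        have h := (hasDerivAt_id ((t : ℂ) * z)).fun_div
          ((hasDerivAt_id ((t : ℂ) * z)).const_add 1) hne1
        refine h.congr_deriv ?_
        simp only [id_eq]
        field_simp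
        ring
      exact hdd.deriv
    rw [hfq, hder]
    simp only [st18phi]
  have hCd : ∀ z ∈ ball ((z₀ : ℂ)) ε₀, HasDerivAt C (st18phi α β z) z := by
    intro z hz
    exact HasDerivAt.congr_of_eventuallyEq (st18_hasDerivAt_G α β (hV z hz).1)
      (eventuallyEq_of_mem (isOpen_ball.mem_nhds hz) hCG)
  have hmemV : (z₀ : ℂ) ∈ ball ((z₀ : ℂ)) ε₀ := mem_ball_self hε₀pos
  have hd1 : deriv C (z₀ : ℂ) = st18phi α β (z₀ : ℂ) := (hCd _ hmemV).deriv
  have hd2 : deriv (deriv C) (z₀ : ℂ) = st18dphi α β (z₀ : ℂ) := by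
    have heq : deriv C =ᶠ[𝓝 ((z₀ : ℂ))] st18phi α β :=
      eventuallyEq_of_mem (isOpen_ball.mem_nhds hmemV) (fun z hz => (hCd z hz).deriv)
    rw [heq.deriv_eq, (st18_hasDerivAt_phi α β hz₀n).deriv]
  -- numeric evaluation
  have ha : (0:ℝ) < 1 + z₀ / 2 := by linarith
  have hcpos : (0:ℝ) < 1 + z₀ := by linarith
  have hu : (0:ℝ) < (((1 + z₀) ^ 2)⁻¹) := by positivity
  set P : ℝ := (1 + z₀ / 2) ^ α * (((1 + z₀) ^ 2)⁻¹) ^ β with hPdef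
  set Q : ℝ := α * (1 + z₀ / 2) ^ (α - 1) * 2⁻¹ * (((1 + z₀) ^ 2)⁻¹) ^ β
      + (1 + z₀ / 2) ^ α * (β * (((1 + z₀) ^ 2)⁻¹) ^ (β - 1)
        * (-(2 * (1 + z₀)) / ((1 + z₀) ^ 2) ^ 2)) with hQdef
  have hPpos : 0 < P := by
    rw [hPdef]
    exact mul_pos (Real.rpow_pos_of_pos ha α) (Real.rpow_pos_of_pos hu β)
  have e1 : (1 : ℂ) + (z₀ : ℂ) / 2 = ((1 + z₀ / 2 : ℝ) : ℂ) := by push_cast; ring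
  have e2 : ((1 + (z₀ : ℂ)) ^ 2)⁻¹ = ((((1 + z₀) ^ 2)⁻¹ : ℝ) : ℂ) := by push_cast; ring
  have hphiz : st18phi α β (z₀ : ℂ) = ((P : ℝ) : ℂ) := by
    rw [st18phi, e1, e2, ← Complex.ofReal_cpow ha.le, ← Complex.ofReal_cpow hu.le,
      ← Complex.ofReal_mul, hPdef]
  have e3 : ((α : ℂ)) - 1 = ((α - 1 : ℝ) : ℂ) := by push_cast; ring
  have e4 : ((β : ℂ)) - 1 = ((β - 1 : ℝ) : ℂ) := by push_cast; ring
  have hdphiz : st18dphi α β (z₀ : ℂ) = ((Q : ℝ) : ℂ) := by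
    rw [st18dphi, e1, e2, e3, e4, ← Complex.ofReal_cpow ha.le, ← Complex.ofReal_cpow hu.le,
      ← Complex.ofReal_cpow ha.le, ← Complex.ofReal_cpow hu.le, hQdef]
    push_cast
    ring
  have part2 : (1 + ((z₀ : ℝ) : ℂ)
        * deriv (deriv C) ((z₀ : ℝ) : ℂ) / deriv C ((z₀ : ℝ) : ℂ)).re
      = β * (α - 3 * β + 3) / ((3 * β - α) * (3 * β - α + 1)) := by
    rw [hd2, hd1, hphiz, hdphiz]
    have hcast : (1 : ℂ) + (z₀ : ℂ) * ((Q : ℝ) : ℂ) / ((P : ℝ) : ℂ)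
        = ((1 + z₀ * Q / P : ℝ) : ℂ) := by push_cast; ring
    rw [hcast, Complex.ofReal_re]
    -- real computation
    have hQP : Q = P * (α / (2 * (1 + z₀ / 2)) - 2 * β / (1 + z₀)) := by
      rw [hQdef, hPdef, Real.rpow_sub_one ha.ne' α, Real.rpow_sub_one hu.ne' β]
      have hra : (0:ℝ) < (1 + z₀ / 2) ^ α := Real.rpow_pos_of_pos ha α
      have hru : (0:ℝ) < (((1 + z₀) ^ 2)⁻¹) ^ β := Real.rpow_pos_of_pos hu β
      field_simp
      ring
    rw [hQP]
    have h5 : 1 + z₀ * (P * (α / (2 * (1 + z₀ / 2)) - 2 * β / (1 + z₀))) / P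
        = 1 + z₀ * (α / (2 * (1 + z₀ / 2)) - 2 * β / (1 + z₀)) := by
      field_simp
    rw [h5, hz₀def]
    have hb1 : (3 * β - α - 1) ≠ 0 := by linarith
    have hb2 : (3 * β - α) ≠ 0 := ne_of_gt (by linarith)
    have hb3 : (3 * β - α + 1) ≠ 0 := ne_of_gt (by linarith)
    field_simp
    ring
  refine ⟨⟨hz0pos, hz0lt⟩, part2, part3, ?_⟩
  intro hconv
  have h4 := hconv ((z₀ : ℝ) : ℂ) (mem_ball_zero_iff.2 hz₀n)
  rw [part2] at h4
  linarith
end
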